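/- If every block (maximal 2-connected subgraph or bridge) of a graph G is isomorphic to K2 or to the triangle C3, then the maximum matching width of G is at most 1. -/

import Mathlib

open SimpleGraph

/-- Size of a maximum matching in the bipartite graph of edges of `G` crossing `(A, Aᶜ)`. -/
noncomputable def mmVal {V : Type*} (G : SimpleGraph V) (A : Set V) : ℕ :=
  sSup {n | ∃ M : Finset (V × V),
    (∀ p ∈ M, p.1 ∈ A ∧ p.2 ∉ A ∧ G.Adj p.1 p.2) ∧
    (∀ p ∈ M, ∀ q ∈ M, p ≠ q → p.1 ≠ q.1 ∧ p.2 ≠ q.2) ∧ M.card = n}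

/-- A branch-decomposition over the vertex set of `G`: a finite subcubic tree together with a
bijection between its leaves and the vertices of `G`. -/
structure BranchDecomp {V : Type*} (G : SimpleGraph V) where
  B : Type
  finB : Finite B
  T : SimpleGraph B
  isTree : T.IsTree
  subcubic : ∀ b : B, (T.neighborSet b).ncard = 1 ∨ (T.neighborSet b).ncard = 3
  L : {b : B // (T.neighborSet b).ncard = 1} ≃ V

/-- The set of vertices of `G` whose leaves lie on the `u`-side of the tree edge `uw`. -/
noncomputable def BranchDecomp.side {V : Type*} {G : SimpleGraph V} (D : BranchDecomp G)
    (u w : D.B) : Set V :=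
  {x : V | (D.T.deleteEdges {s(u, w)}).Reachable (D.L.symm x).1 u}

/-- The width of a branch-decomposition is at most `k`. -/
def BranchDecomp.widthLE {V : Type*} {G : SimpleGraph V} (D : BranchDecomp G) (k : ℕ) : Prop :=
  ∀ u w : D.B, D.T.Adj u w → mmVal G (D.side u w) ≤ k

/-- The maximum matching width of `G`. -/
noncomputable def mmw {V : Type*} (G : SimpleGraph V) : ℕ :=
  sInf {k | ∃ D : BranchDecomp G, D.widthLE k}
/-- `H` is a minor of `G`: there is a family of nonempty, pairwise disjoint, connected branch
sets in `G` indexed by the vertices of `H`, with edges of `H` realized by edges of `G`. -/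
def IsMinor {W : Type*} {V : Type*} (H : SimpleGraph W) (G : SimpleGraph V) : Prop :=
  ∃ φ : W → Set V,
    (∀ w, (φ w).Nonempty) ∧
    (∀ w, (G.induce (φ w)).Connected) ∧
    (∀ w w', w ≠ w' → Disjoint (φ w) (φ w')) ∧
    (∀ w w', H.Adj w w' → ∃ a ∈ φ w, ∃ b ∈ φ w', G.Adj a b)

/-- The `k × k` grid graph: vertices `(i, j)`, edges between vertices at Manhattan distance 1. -/
def gridGraph (k : ℕ) : SimpleGraph (Fin k × Fin k) :=
  SimpleGraph.fromRel (fun p q =>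
    (p.1 = q.1 ∧ (p.2 : ℕ) + 1 = (q.2 : ℕ)) ∨ (p.2 = q.2 ∧ (p.1 : ℕ) + 1 = (q.1 : ℕ)))

/-- The row `R_j` of the `k × k` grid. -/
def gridRow (k : ℕ) (j : Fin k) : Set (Fin k × Fin k) := {p | p.2 = j}

/-- The column `C_i` of the `k × k` grid. -/
def gridCol (k : ℕ) (i : Fin k) : Set (Fin k × Fin k) := {p | p.1 = i}

/-- `X` is small: `mm(X) < k` and `X` contains no full row. -/
def GridSmall (k : ℕ) (X : Set (Fin k × Fin k)) : Prop :=
  mmVal (gridGraph k) X < k ∧ ∀ j : Fin k, ¬ gridRow k j ⊆ X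

/-- `G` is `k`-connected: `|V(G)| ≥ k` and deleting fewer than `k` vertices leaves `G`
connected. -/
def KConnected {V : Type*} (k : ℕ) (G : SimpleGraph V) : Prop :=
  k ≤ Nat.card V ∧ ∀ X : Set V, X.ncard < k → (G.induce Xᶜ).Connected

/-- A block of `G`: a bridge (with its two endpoints), or a maximal 2-connected induced
subgraph. -/
def IsBlock {V : Type*} (G : SimpleGraph V) (Bs : Set V) : Prop :=
  (∃ a b : V, G.Adj a b ∧ G.IsBridge s(a, b) ∧ Bs = {a, b}) ∨
  (KConnected 2 (G.induce Bs) ∧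
    ∀ B' : Set V, Bs ⊆ B' → KConnected 2 (G.induce B') → B' = Bs)

/-- A tree-representation of `G`: a finite subcubic tree `T` and nontrivial subtrees `F x`
for each vertex `x` such that adjacent vertices have intersecting subtrees. -/
structure TreeRep {V : Type*} (G : SimpleGraph V) where
  B : Type
  finB : Finite B
  T : SimpleGraph B
  isTree : T.IsTree
  subcubic : ∀ b : B, (T.neighborSet b).ncard = 1 ∨ (T.neighborSet b).ncard = 3
  F : V → Set B
  nontrivial : ∀ x : V, ∃ u w : B, u ∈ F x ∧ w ∈ F x ∧ T.Adj u w
  subtree : ∀ x : V, (T.induce (F x)).Connected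
  adjMeet : ∀ x y : V, G.Adj x y → (F x ∩ F y).Nonempty

/-- Every edge of the tree lies in at most `k` of the subtrees. -/
def TreeRep.widthLE {V : Type*} {G : SimpleGraph V} (R : TreeRep G) (k : ℕ) : Prop :=
  ∀ u w : R.B, R.T.Adj u w → {x : V | u ∈ R.F x ∧ w ∈ R.F x}.ncard ≤ k

/-- Contraction of the edge `uv` of `G` (the merged vertex is `u`). -/
def contractEdge {V : Type*} (G : SimpleGraph V) (u v : V) : SimpleGraph {x : V // x ≠ v} :=
  SimpleGraph.fromRel (fun x y =>
    G.Adj x.1 y.1 ∨ (x.1 = u ∧ G.Adj v y.1) ∨ (y.1 = u ∧ G.Adj v x.1))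

set_option linter.unusedSectionVars false
section MMWAux
open SimpleGraph

variable {V : Type} [Finite V]

/-- The defining set of `mmVal`. -/
def mmSet (G : SimpleGraph V) (A : Set V) : Set ℕ :=
  {n | ∃ M : Finset (V × V),
    (∀ p ∈ M, p.1 ∈ A ∧ p.2 ∉ A ∧ G.Adj p.1 p.2) ∧
    (∀ p ∈ M, ∀ q ∈ M, p ≠ q → p.1 ≠ q.1 ∧ p.2 ≠ q.2) ∧ M.card = n}

lemma mmVal_eq (G : SimpleGraph V) (A : Set V) : mmVal G A = sSup (mmSet G A) := rfl

lemma zero_mem_mmSet (G : SimpleGraph V) (A : Set V) : 0 ∈ mmSet G A := by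
  refine ⟨∅, ?_, ?_, rfl⟩ <;> simp

lemma mmSet_bddAbove (G : SimpleGraph V) (A : Set V) : BddAbove (mmSet G A) := by
  classical
  have : Fintype (V × V) := Fintype.ofFinite _
  refine ⟨Fintype.card (V × V), ?_⟩
  rintro n ⟨M, h1, h2, rfl⟩
  exact Finset.card_le_univ M

lemma mmVal_le_of_forall (G : SimpleGraph V) (A : Set V) (k : ℕ)
    (h : ∀ M : Finset (V × V),
      (∀ p ∈ M, p.1 ∈ A ∧ p.2 ∉ A ∧ G.Adj p.1 p.2) →
      (∀ p ∈ M, ∀ q ∈ M, p ≠ q → p.1 ≠ q.1 ∧ p.2 ≠ q.2) → M.card ≤ k) :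
    mmVal G A ≤ k := by
  refine csSup_le ⟨0, zero_mem_mmSet G A⟩ ?_
  rintro n ⟨M, h1, h2, rfl⟩
  exact h M h1 h2

lemma le_mmVal (G : SimpleGraph V) (A : Set V) {n : ℕ} (hn : n ∈ mmSet G A) :
    n ≤ mmVal G A :=
  le_csSup (mmSet_bddAbove G A) hn

/-- If all crossing edges of `A` pass through one vertex `v`, then `mmVal G A ≤ 1`. -/
lemma star_mmVal (G : SimpleGraph V) (A : Set V) (v : V)
    (hv : ∀ p q : V, p ∈ A → q ∉ A → G.Adj p q → p = v ∨ q = v) :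
    mmVal G A ≤ 1 := by
  refine mmVal_le_of_forall G A 1 ?_
  intro M h1 h2
  by_contra hM
  push_neg at hM
  obtain ⟨p, hp, q, hq, hpq⟩ := Finset.one_lt_card.mp hM
  obtain ⟨hp1, hp2, hp3⟩ := h1 p hp
  obtain ⟨hq1, hq2, hq3⟩ := h1 q hq
  obtain ⟨hne1, hne2⟩ := h2 p hp q hq hpq
  rcases hv _ _ hp1 hp2 hp3 with h | h <;> rcases hv _ _ hq1 hq2 hq3 with h' | h'
  · exact hne1 (h.trans h'.symm)
  · exact hq2 (h' ▸ h ▸ hp1)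
  · exact hp2 (h ▸ h' ▸ hq1)
  · exact hne2 (h.trans h'.symm)

/-- Transfer `mmVal ≤ 1` from an induced subgraph when all crossing pairs live inside `S`. -/
lemma mmVal_transfer (G : SimpleGraph V) (S : Set V) (A : Set V) (A' : Set ↥S)
    (H : ∀ p q : V, p ∈ A → q ∉ A → G.Adj p q →
      ∃ (hp : p ∈ S) (hq : q ∈ S), (⟨p, hp⟩ : ↥S) ∈ A' ∧ (⟨q, hq⟩ : ↥S) ∉ A')
    (h1 : mmVal (G.induce S) A' ≤ 1) :
    mmVal G A ≤ 1 := by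
  classical
  refine mmVal_le_of_forall G A 1 ?_
  intro M hM1 hM2
  by_contra hM
  push_neg at hM
  obtain ⟨p, hp, q, hq, hpq⟩ := Finset.one_lt_card.mp hM
  obtain ⟨hp1, hp2, hp3⟩ := hM1 p hp
  obtain ⟨hq1, hq2, hq3⟩ := hM1 q hq
  obtain ⟨hne1, hne2⟩ := hM2 p hp q hq hpq
  obtain ⟨hpS1, hpS2, hpA1, hpA2⟩ := H _ _ hp1 hp2 hp3
  obtain ⟨hqS1, hqS2, hqA1, hqA2⟩ := H _ _ hq1 hq2 hq3
  have h2 : 2 ∈ mmSet (G.induce S) A' := by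
    refine ⟨{((⟨p.1, hpS1⟩ : ↥S), (⟨p.2, hpS2⟩ : ↥S)),
             ((⟨q.1, hqS1⟩ : ↥S), (⟨q.2, hqS2⟩ : ↥S))}, ?_, ?_, ?_⟩
    · intro r hr
      simp only [Finset.mem_insert, Finset.mem_singleton] at hr
      rcases hr with rfl | rfl
      · exact ⟨hpA1, hpA2, hp3⟩
      · exact ⟨hqA1, hqA2, hq3⟩
    · intro r hr r' hr' hrr'
      simp only [Finset.mem_insert, Finset.mem_singleton] at hr hr'
      rcases hr with rfl | rfl <;> rcases hr' with rfl | rfl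
      · exact absurd rfl hrr'
      · exact ⟨fun h => hne1 (congrArg Subtype.val h), fun h => hne2 (congrArg Subtype.val h)⟩
      · exact ⟨fun h => hne1 (congrArg Subtype.val h).symm, fun h => hne2 (congrArg Subtype.val h).symm⟩
      · exact absurd rfl hrr'
    · rw [Finset.card_insert_of_notMem, Finset.card_singleton]
      simp only [Finset.mem_singleton, Prod.mk.injEq, not_and]
      intro h
      exact absurd (congrArg Subtype.val h) hne1
  have := le_mmVal (G.induce S) A' h2
  omega

end MMWAux
section AddLeaf
open SimpleGraph
variable {B : Type}

/-- Attach a new pendant vertex (`none`) to the vertex `x` of `G`. -/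
def addLeaf (G : SimpleGraph B) (x : B) : SimpleGraph (Option B) where
  Adj a b := (∃ a' b', a = some a' ∧ b = some b' ∧ G.Adj a' b') ∨
    (a = none ∧ b = some x) ∨ (a = some x ∧ b = none)
  symm := by
    constructor
    rintro a b (⟨a', b', rfl, rfl, h⟩ | ⟨rfl, rfl⟩ | ⟨rfl, rfl⟩)
    · exact Or.inl ⟨b', a', rfl, rfl, h.symm⟩
    · exact Or.inr (Or.inr ⟨rfl, rfl⟩)
    · exact Or.inr (Or.inl ⟨rfl, rfl⟩)
  loopless := by
    constructor
    rintro a (⟨a', b', rfl, h1, h⟩ | ⟨rfl, h⟩ | ⟨h, h'⟩)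
    · rw [Option.some_inj] at h1; exact G.irrefl (h1 ▸ h)
    · cases h
    · cases h.symm.trans h'

@[simp] lemma addLeaf_adj_some_some {G : SimpleGraph B} {x a b : B} :
    (addLeaf G x).Adj (some a) (some b) ↔ G.Adj a b := by
  constructor
  · rintro (⟨a', b', ha, hb, h⟩ | ⟨h, _⟩ | ⟨_, h⟩)
    · rw [Option.some_inj] at ha hb; exact ha ▸ hb ▸ h
    · cases h
    · cases h
  · intro h; exact Or.inl ⟨a, b, rfl, rfl, h⟩

@[simp] lemma addLeaf_adj_none_some {G : SimpleGraph B} {x b : B} :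
    (addLeaf G x).Adj none (some b) ↔ b = x := by
  constructor
  · rintro (⟨a', b', ha, _, _⟩ | ⟨_, hb⟩ | ⟨h, _⟩)
    · cases ha
    · rw [Option.some_inj] at hb; exact hb
    · cases h
  · rintro rfl; exact Or.inr (Or.inl ⟨rfl, rfl⟩)

@[simp] lemma addLeaf_adj_some_none {G : SimpleGraph B} {x a : B} :
    (addLeaf G x).Adj (some a) none ↔ a = x := by
  rw [SimpleGraph.adj_comm]; exact addLeaf_adj_none_some

@[simp] lemma addLeaf_adj_none_none {G : SimpleGraph B} {x : B} :
    ¬ (addLeaf G x).Adj none none := fun h => (addLeaf G x).irrefl h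

/-- The natural homomorphism `G →g addLeaf G x`. -/
def addLeafHom (G : SimpleGraph B) (x : B) : G →g addLeaf G x :=
  ⟨some, fun h => addLeaf_adj_some_some.mpr h⟩

@[simp] lemma addLeafHom_apply {G : SimpleGraph B} {x : B} (a : B) :
    addLeafHom G x a = some a := rfl

lemma addLeaf_connected {G : SimpleGraph B} {x : B} (hG : G.Connected) :
    (addLeaf G x).Connected := by
  have hne : Nonempty B := hG.nonempty
  have hsome : ∀ a b : B, (addLeaf G x).Reachable (some a) (some b) := by
    intro a b
    have := (hG.preconnected a b).map (addLeafHom G x)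
    simpa using this
  constructor
  intro a b
  match a, b with
  | some a, some b => exact hsome a b
  | none, some b =>
      exact (SimpleGraph.Adj.reachable (addLeaf_adj_none_some.mpr rfl)).trans (hsome x b)
  | some a, none =>
      exact ((SimpleGraph.Adj.reachable (addLeaf_adj_none_some.mpr rfl)).trans (hsome x a)).symm
  | none, none => exact SimpleGraph.Reachable.refl _

@[simp] lemma addLeaf_neighborSet_none {G : SimpleGraph B} {x : B} :
    (addLeaf G x).neighborSet none = {some x} := by
  ext (_ | b)
  · simp [SimpleGraph.neighborSet]
  · simp [SimpleGraph.neighborSet, eq_comm]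

lemma addLeaf_neighborSet_some_ne {G : SimpleGraph B} {x b : B} (hbx : b ≠ x) :
    (addLeaf G x).neighborSet (some b) = some '' G.neighborSet b := by
  ext (_ | c)
  · simp [SimpleGraph.neighborSet, hbx]
  · simp [SimpleGraph.neighborSet]

lemma addLeaf_neighborSet_some_eq {G : SimpleGraph B} {x : B} :
    (addLeaf G x).neighborSet (some x) = insert none (some '' G.neighborSet x) := by
  ext (_ | c)
  · simp [SimpleGraph.neighborSet]
  · simp [SimpleGraph.neighborSet]

instance {α : Type*} [Finite α] : Finite (Option α) :=
  Finite.of_surjective (fun x : α ⊕ Unit => Sum.elim some (fun _ => none) x)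
    (by rintro (_ | a); exacts [⟨Sum.inr (), rfl⟩, ⟨Sum.inl a, rfl⟩])

lemma addLeaf_deg_none {G : SimpleGraph B} {x : B} :
    ((addLeaf G x).neighborSet none).ncard = 1 := by
  rw [addLeaf_neighborSet_none]; simp

lemma addLeaf_deg_some_ne [Finite B] {G : SimpleGraph B} {x b : B} (hbx : b ≠ x) :
    ((addLeaf G x).neighborSet (some b)).ncard = (G.neighborSet b).ncard := by
  rw [addLeaf_neighborSet_some_ne hbx,
    Set.ncard_image_of_injective _ (Option.some_injective B)]

lemma addLeaf_deg_some_eq [Finite B] {G : SimpleGraph B} {x : B} :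
    ((addLeaf G x).neighborSet (some x)).ncard = (G.neighborSet x).ncard + 1 := by
  rw [addLeaf_neighborSet_some_eq,
    Set.ncard_insert_of_notMem (by simp) (Set.toFinite _),
    Set.ncard_image_of_injective _ (Option.some_injective B)]

/-- Walks from a vertex with no neighbors are trivial. -/
lemma isolated_reachable {C : Type*} {H : SimpleGraph C} {v w : C}
    (hv : ∀ u, ¬ H.Adj v u) (h : H.Reachable v w) : w = v := by
  obtain ⟨p⟩ := h
  cases p with
  | nil => rfl
  | cons h' _ => exact absurd h' (hv _)

/-- A nontrivial walk contains an edge into its final vertex. -/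
lemma exists_last_edge {C : Type*} {H : SimpleGraph C} :
    ∀ {u v : C} (p : H.Walk u v), u ≠ v → ∃ z, H.Adj z v ∧ s(z, v) ∈ p.edges := by
  intro u v p
  induction p with
  | nil => intro h; exact absurd rfl h
  | @cons a m c h q ih =>
      intro _
      by_cases hmc : m = c
      · subst hmc
        exact ⟨a, h, by simp⟩
      · obtain ⟨z, hz1, hz2⟩ := ih hmc
        exact ⟨z, hz1, by simp [hz2]⟩

lemma addLeaf_no_cycle_none {G : SimpleGraph B} {x : B}
    (c : (addLeaf G x).Walk none none) : ¬ c.IsCycle := by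
  intro hc
  cases c with
  | nil => simpa using hc.three_le_length
  | @cons _ m _ h d =>
      cases m with
      | none => exact addLeaf_adj_none_none h
      | some m =>
        have hmx : m = x := addLeaf_adj_none_some.mp h
        obtain ⟨z, hz1, hz2⟩ := exists_last_edge d (by simp)
        cases z with
        | none => exact addLeaf_adj_none_none hz1
        | some z =>
          have hzx : z = x := addLeaf_adj_some_none.mp hz1
          rw [hzx] at hz2
          have hnd := hc.edges_nodup
          rw [SimpleGraph.Walk.edges_cons, List.nodup_cons] at hnd
          have heq : s(none, some m) = (s(none, some x) : Sym2 (Option B)) := by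
            rw [hmx]
          apply hnd.1
          rw [heq]
          rwa [Sym2.eq_swap] at hz2

lemma addLeaf_walk_proj {G : SimpleGraph B} {x : B} :
    ∀ {p q : Option B} (w : (addLeaf G x).Walk p q), none ∉ w.support →
      ∀ {a b : B} (hp : p = some a) (hq : q = some b),
        ∃ v : G.Walk a b, v.map (addLeafHom G x) = w.copy hp hq := by
  intro p q w
  induction w with
  | nil =>
      rintro _ a b rfl hq
      rw [Option.some_inj] at hq
      subst hq
      exact ⟨SimpleGraph.Walk.nil, rfl⟩
  | @cons p m q h w ih =>
      intro hn a b hp hq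
      subst hp; subst hq
      rw [SimpleGraph.Walk.support_cons, List.mem_cons] at hn
      push_neg at hn
      have hm : m ∈ w.support := w.start_mem_support
      cases m with
      | none => exact absurd hm hn.2
      | some c =>
          obtain ⟨v, hv⟩ := ih hn.2 rfl rfl
          rw [SimpleGraph.Walk.copy_rfl_rfl] at hv
          have hac : G.Adj a c := addLeaf_adj_some_some.mp h
          refine ⟨SimpleGraph.Walk.cons hac v, ?_⟩
          rw [SimpleGraph.Walk.copy_rfl_rfl, SimpleGraph.Walk.map_cons, hv]
          rfl

lemma addLeaf_isAcyclic {G : SimpleGraph B} {x : B} (hG : G.IsAcyclic) :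
    (addLeaf G x).IsAcyclic := by
  classical
  intro u c hc
  by_cases hn : none ∈ c.support
  · exact addLeaf_no_cycle_none (c.rotate none hn) (hc.rotate hn)
  · cases u with
    | none => exact hn c.start_mem_support
    | some a =>
        obtain ⟨v, hv⟩ := addLeaf_walk_proj c hn rfl rfl
        rw [SimpleGraph.Walk.copy_rfl_rfl] at hv
        rw [← hv] at hc
        exact hG v ((SimpleGraph.Walk.map_isCycle_iff_of_injective
          (Option.some_injective B)).mp hc)

lemma addLeaf_isTree {G : SimpleGraph B} {x : B} (hG : G.IsTree) :
    (addLeaf G x).IsTree :=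
  ⟨addLeaf_connected hG.isConnected, addLeaf_isAcyclic hG.IsAcyclic⟩

lemma addLeaf_reach_pendant_none {G : SimpleGraph B} {x : B} {z : Option B} :
    ((addLeaf G x).deleteEdges {s(none, some x)}).Reachable none z ↔ z = none := by
  constructor
  · intro h
    refine isolated_reachable ?_ h
    rintro (_ | u) hu <;> rw [SimpleGraph.deleteEdges_adj] at hu
    · exact addLeaf_adj_none_none hu.1
    · have := addLeaf_adj_none_some.mp hu.1
      subst this
      exact hu.2 rfl
  · rintro rfl
    exact SimpleGraph.Reachable.refl _

lemma addLeaf_reach_pendant_some {G : SimpleGraph B} {x : B} (hG : G.Connected) (a b : B) :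
    ((addLeaf G x).deleteEdges {s(none, some x)}).Reachable (some a) (some b) := by
  exact (hG.preconnected a b).map
    (⟨some, fun hab => SimpleGraph.deleteEdges_adj.mpr
      ⟨addLeaf_adj_some_some.mpr hab, by simp⟩⟩ :
        G →g (addLeaf G x).deleteEdges {s(none, some x)})

lemma sym2_some_ne {a b u w : B} (h : s(a, b) ∉ ({s(u, w)} : Set (Sym2 B))) :
    s(some a, some b) ∉ ({s(some u, some w)} : Set (Sym2 (Option B))) := by
  intro hc
  apply h
  rw [Set.mem_singleton_iff] at hc ⊢
  rw [Sym2.eq_iff] at hc ⊢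
  rcases hc with ⟨h1, h2⟩ | ⟨h1, h2⟩
  · exact Or.inl ⟨Option.some_injective B h1, Option.some_injective B h2⟩
  · exact Or.inr ⟨Option.some_injective B h1, Option.some_injective B h2⟩

lemma addLeaf_reach_old_aux {G : SimpleGraph B} {x u w : B} :
    ∀ (n : ℕ) {p q : Option B}
      (wk : ((addLeaf G x).deleteEdges {s(some u, some w)}).Walk p q),
      wk.length ≤ n → (G.deleteEdges {s(u, w)}).Reachable (p.getD x) (q.getD x) := by
  intro n
  induction n with
  | zero =>
      intro p q wk hl
      cases wk with
      | nil => exact SimpleGraph.Reachable.refl _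
      | cons h rest => simp [SimpleGraph.Walk.length_cons] at hl
  | succ n ih =>
      intro p q wk hl
      cases wk with
      | nil => exact SimpleGraph.Reachable.refl _
      | @cons _ m _ h rest =>
          rw [SimpleGraph.Walk.length_cons] at hl
          rw [SimpleGraph.deleteEdges_adj] at h
          match p, m, h with
          | some a, some c, h =>
              have hac : G.Adj a c := addLeaf_adj_some_some.mp h.1
              have hedge : s(a, c) ∉ ({s(u, w)} : Set (Sym2 B)) := by
                intro hc
                apply h.2
                rw [Set.mem_singleton_iff] at hc ⊢
                rw [Sym2.eq_iff] at hc ⊢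
                rcases hc with ⟨rfl, rfl⟩ | ⟨rfl, rfl⟩
                · exact Or.inl ⟨rfl, rfl⟩
                · exact Or.inr ⟨rfl, rfl⟩
              have step : (G.deleteEdges {s(u, w)}).Adj a c :=
                SimpleGraph.deleteEdges_adj.mpr ⟨hac, hedge⟩
              exact step.reachable.trans (ih rest (by omega))
          | some a, none, h =>
              have hax : a = x := addLeaf_adj_some_none.mp h.1
              cases rest with
              | nil =>
                  simp only [Option.getD_some, Option.getD_none]
                  rw [hax]
              | @cons _ m2 _ h2 rest2 =>
                  rw [SimpleGraph.Walk.length_cons] at hl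
                  rw [SimpleGraph.deleteEdges_adj] at h2
                  match m2, h2 with
                  | some c2, h2 =>
                      have hcx : c2 = x := addLeaf_adj_none_some.mp h2.1
                      have := ih rest2 (by omega)
                      simp only [Option.getD_some] at this ⊢
                      rw [hcx] at this
                      rw [hax]
                      exact this
                  | none, h2 => exact absurd h2.1 addLeaf_adj_none_none
          | none, some c, h =>
              have hcx : c = x := addLeaf_adj_none_some.mp h.1
              have := ih rest (by omega)
              simp only [Option.getD_some, Option.getD_none] at this ⊢
              rw [hcx] at this
              exact this
          | none, none, h => exact absurd h.1 addLeaf_adj_none_none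

lemma addLeaf_reach_old {G : SimpleGraph B} {x u w : B} {p q : Option B} :
    ((addLeaf G x).deleteEdges {s(some u, some w)}).Reachable p q ↔
      (G.deleteEdges {s(u, w)}).Reachable (p.getD x) (q.getD x) := by
  constructor
  · rintro ⟨wk⟩
    exact addLeaf_reach_old_aux wk.length wk le_rfl
  · intro h
    have hsome : ∀ a b : B, (G.deleteEdges {s(u, w)}).Reachable a b →
        ((addLeaf G x).deleteEdges {s(some u, some w)}).Reachable (some a) (some b) := by
      intro a b hr
      exact hr.map (⟨some, fun hab => SimpleGraph.deleteEdges_adj.mpr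
        ⟨addLeaf_adj_some_some.mpr (SimpleGraph.deleteEdges_adj.mp hab).1,
          sym2_some_ne (SimpleGraph.deleteEdges_adj.mp hab).2⟩⟩ :
        G.deleteEdges {s(u, w)} →g (addLeaf G x).deleteEdges {s(some u, some w)})
    have hpend : ((addLeaf G x).deleteEdges {s(some u, some w)}).Adj none (some x) := by
      rw [SimpleGraph.deleteEdges_adj]
      refine ⟨addLeaf_adj_none_some.mpr rfl, ?_⟩
      simp
    match p, q with
    | some a, some b => exact hsome a b h
    | some a, none => exact (hsome a x h).trans hpend.symm.reachable
    | none, some b => exact hpend.reachable.trans (hsome x b h)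
    | none, none => exact SimpleGraph.Reachable.refl _


end AddLeaf
section Op
open SimpleGraph
variable {B : Type} [Finite B]

/-- Attach two new leaves at the vertex `ℓ` of `T`. -/
abbrev opT (T : SimpleGraph B) (ℓ : B) : SimpleGraph (Option (Option B)) :=
  addLeaf (addLeaf T ℓ) (some ℓ)

/-- Collapse new vertices onto `ℓ`. -/
def ρ {B : Type} (ℓ : B) (p : Option (Option B)) : B := (p.getD (some ℓ)).getD ℓ

@[simp] lemma ρ_none {ℓ : B} : ρ ℓ none = ℓ := rfl
@[simp] lemma ρ_some_none {ℓ : B} : ρ ℓ (some none) = ℓ := rfl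
@[simp] lemma ρ_ss {ℓ c : B} : ρ ℓ (some (some c)) = c := rfl

lemma opT_isTree {T : SimpleGraph B} {ℓ : B} (hT : T.IsTree) : (opT T ℓ).IsTree :=
  addLeaf_isTree (addLeaf_isTree hT)

lemma opT_adj_cases {T : SimpleGraph B} {ℓ : B} {p q : Option (Option B)}
    (h : (opT T ℓ).Adj p q) :
    (p = none ∧ q = some (some ℓ)) ∨ (p = some (some ℓ) ∧ q = none) ∨
    (p = some none ∧ q = some (some ℓ)) ∨ (p = some (some ℓ) ∧ q = some none) ∨
    (∃ u w, T.Adj u w ∧ p = some (some u) ∧ q = some (some w)) := by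
  match p, q with
  | none, none => exact absurd h addLeaf_adj_none_none
  | none, some q =>
      have := addLeaf_adj_none_some.mp h
      exact Or.inl ⟨rfl, by rw [this]⟩
  | some p, none =>
      have := addLeaf_adj_some_none.mp h
      exact Or.inr (Or.inl ⟨by rw [this], rfl⟩)
  | some p, some q =>
      have h2 : (addLeaf T ℓ).Adj p q := addLeaf_adj_some_some.mp h
      match p, q with
      | none, none => exact absurd h2 addLeaf_adj_none_none
      | none, some q =>
          have := addLeaf_adj_none_some.mp h2
          exact Or.inr (Or.inr (Or.inl ⟨rfl, by rw [this]⟩))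
      | some p, none =>
          have := addLeaf_adj_some_none.mp h2
          exact Or.inr (Or.inr (Or.inr (Or.inl ⟨by rw [this], rfl⟩)))
      | some p, some q =>
          exact Or.inr (Or.inr (Or.inr (Or.inr ⟨p, q, addLeaf_adj_some_some.mp h2, rfl, rfl⟩)))

lemma opT_deg_none {T : SimpleGraph B} {ℓ : B} :
    ((opT T ℓ).neighborSet none).ncard = 1 := addLeaf_deg_none

lemma opT_deg_some_none {T : SimpleGraph B} {ℓ : B} :
    ((opT T ℓ).neighborSet (some none)).ncard = 1 := by
  rw [addLeaf_deg_some_ne (by simp)]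
  exact addLeaf_deg_none

lemma opT_deg_ss_eq {T : SimpleGraph B} {ℓ : B} :
    ((opT T ℓ).neighborSet (some (some ℓ))).ncard = (T.neighborSet ℓ).ncard + 2 := by
  rw [addLeaf_deg_some_eq, addLeaf_deg_some_eq]

lemma opT_deg_ss_ne {T : SimpleGraph B} {ℓ c : B} (hc : c ≠ ℓ) :
    ((opT T ℓ).neighborSet (some (some c))).ncard = (T.neighborSet c).ncard := by
  rw [addLeaf_deg_some_ne (by simpa using hc), addLeaf_deg_some_ne hc]

/-- Reachability after deleting the pendant edge at `none`. -/
lemma opT_reach_new2 {T : SimpleGraph B} {ℓ : B} {z : Option (Option B)} :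
    ((opT T ℓ).deleteEdges {s(none, some (some ℓ))}).Reachable z none ↔ z = none := by
  constructor
  · intro h
    exact addLeaf_reach_pendant_none.mp h.symm
  · rintro rfl; exact SimpleGraph.Reachable.refl _

lemma opT_reach_new2' {T : SimpleGraph B} {ℓ : B} (hT : T.Connected)
    {p q : Option (Option B)} (hp : p ≠ none) (hq : q ≠ none) :
    ((opT T ℓ).deleteEdges {s(none, some (some ℓ))}).Reachable p q := by
  match p, q with
  | some p, some q => exact addLeaf_reach_pendant_some (addLeaf_connected hT) p q

/-- Reachability after deleting the pendant edge at `some none`. -/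
lemma opT_reach_new1 {T : SimpleGraph B} {ℓ : B} {z : Option (Option B)} :
    ((opT T ℓ).deleteEdges {s(some none, some (some ℓ))}).Reachable z (some none) ↔
      z = some none := by
  have key : ∀ y : Option (Option B),
      ((opT T ℓ).deleteEdges {s(some none, some (some ℓ))}).Reachable y (some none) ↔
      ((addLeaf T ℓ).deleteEdges {s(none, some ℓ)}).Reachable (y.getD (some ℓ)) none := by
    intro y
    exact addLeaf_reach_old (x := some ℓ) (u := none) (w := some ℓ) (p := y) (q := some none)
  rw [key]
  constructor
  · intro h
    have := addLeaf_reach_pendant_none.mp h.symm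
    match z, this with
    | some none, _ => rfl
  · rintro rfl
    exact SimpleGraph.Reachable.refl _

lemma opT_reach_new1' {T : SimpleGraph B} {ℓ : B} (hT : T.Connected)
    {p q : Option (Option B)} (hp : p ≠ some none) (hq : q ≠ some none) :
    ((opT T ℓ).deleteEdges {s(some none, some (some ℓ))}).Reachable p q := by
  have key : ∀ (y y' : Option (Option B)),
      ((opT T ℓ).deleteEdges {s(some none, some (some ℓ))}).Reachable y y' ↔
      ((addLeaf T ℓ).deleteEdges {s(none, some ℓ)}).Reachable (y.getD (some ℓ))
        (y'.getD (some ℓ)) := by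
    intro y y'
    exact addLeaf_reach_old (x := some ℓ) (u := none) (w := some ℓ)
  rw [key]
  have hps : ∃ a, p.getD (some ℓ) = some a := by
    match p, hp with
    | none, _ => exact ⟨ℓ, rfl⟩
    | some (some c), _ => exact ⟨c, rfl⟩
  have hqs : ∃ a, q.getD (some ℓ) = some a := by
    match q, hq with
    | none, _ => exact ⟨ℓ, rfl⟩
    | some (some c), _ => exact ⟨c, rfl⟩
  obtain ⟨a, ha⟩ := hps
  obtain ⟨a', ha'⟩ := hqs
  rw [ha, ha']
  exact addLeaf_reach_pendant_some hT a a'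

/-- Reachability after deleting an original edge. -/
lemma opT_reach_old {T : SimpleGraph B} {ℓ : B} {u w : B} {p q : Option (Option B)} :
    ((opT T ℓ).deleteEdges {s(some (some u), some (some w))}).Reachable p q ↔
      (T.deleteEdges {s(u, w)}).Reachable (ρ ℓ p) (ρ ℓ q) := by
  rw [addLeaf_reach_old (x := some ℓ) (u := some u) (w := some w)]
  exact addLeaf_reach_old (x := ℓ) (u := u) (w := w)

end Op

section EquivHelpers

/-- Peel `none` off a subtype of an option type when `none` satisfies the predicate. -/
def optionPeel {α : Type*} (Q : Option α → Prop) (hQ : Q none) :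
    {x : Option α // Q x} ≃ Option {a : α // Q (some a)} where
  toFun := fun ⟨x, hx⟩ => match x, hx with
    | none, _ => none
    | some a, hx => some ⟨a, hx⟩
  invFun := fun o => match o with
    | none => ⟨none, hQ⟩
    | some ⟨a, ha⟩ => ⟨some a, ha⟩
  left_inv := by rintro ⟨(_ | a), hx⟩ <;> rfl
  right_inv := by rintro (_ | ⟨a, ha⟩) <;> rfl

@[simp] lemma optionPeel_none {α : Type*} (Q : Option α → Prop) (hQ : Q none) (h) :
    optionPeel Q hQ ⟨none, h⟩ = none := rfl

@[simp] lemma optionPeel_some {α : Type*} (Q : Option α → Prop) (hQ : Q none) (a : α) (h) :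
    optionPeel Q hQ ⟨some a, h⟩ = some ⟨a, h⟩ := rfl

/-- Relabel the leaves other than `ℓ`. -/
def leafRelabel {B W : Type*} {Pb : B → Prop} (L0 : {b : B // Pb b} ≃ W) (ℓ : B) (hl : Pb ℓ) :
    {c : B // Pb c ∧ c ≠ ℓ} ≃ {w : W // w ≠ L0 ⟨ℓ, hl⟩} where
  toFun c := ⟨L0 ⟨c.1, c.2.1⟩, fun h => c.2.2 (congrArg Subtype.val (L0.injective h))⟩
  invFun w := ⟨(L0.symm w.1).1, (L0.symm w.1).2, by
    intro h
    apply w.2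
    have h2 : L0.symm w.1 = ⟨ℓ, hl⟩ := Subtype.ext h
    exact (L0.apply_symm_apply w.1).symm.trans (congrArg L0 h2)⟩
  left_inv := by
    rintro ⟨c, hc1, hc2⟩
    ext
    simp
  right_inv := by
    rintro ⟨w, hw⟩
    ext
    simp

@[simp] lemma leafRelabel_apply {B W : Type*} {Pb : B → Prop} (L0 : {b : B // Pb b} ≃ W)
    (ℓ : B) (hl : Pb ℓ) (c : {c : B // Pb c ∧ c ≠ ℓ}) :
    (leafRelabel L0 ℓ hl c : W) = L0 ⟨c.1, c.2.1⟩ := rfl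

end EquivHelpers

section EquivHelpers2

/-- Remove `none` from an option type. -/
def optionNeNone {β : Type*} : {w : Option β // w ≠ none} ≃ β where
  toFun := fun ⟨w, hw⟩ => match w, hw with
    | some b, _ => b
  invFun b := ⟨some b, by simp⟩
  left_inv := by
    rintro ⟨(_ | b), hw⟩
    · exact absurd rfl hw
    · rfl
  right_inv := fun b => rfl

@[simp] lemma optionNeNone_some {β : Type*} (b : β) (h) :
    optionNeNone ⟨some b, h⟩ = b := rfl

end EquivHelpers2
section Extend
open SimpleGraph

lemma opT_leaf_iff {B : Type} [Finite B] {T : SimpleGraph B} {ℓ : B}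
    (hl : (T.neighborSet ℓ).ncard = 1) (c : B) :
    ((opT T ℓ).neighborSet (some (some c))).ncard = 1 ↔
      (T.neighborSet c).ncard = 1 ∧ c ≠ ℓ := by
  by_cases hc : c = ℓ
  · subst hc
    rw [opT_deg_ss_eq, hl]
    simp
  · rw [opT_deg_ss_ne hc]
    simp [hc]

/-- The leaf structure of `opT T ℓ`. -/
noncomputable def leavesOpEquiv {B : Type} [Finite B] (T : SimpleGraph B) (ℓ : B)
    (hl : (T.neighborSet ℓ).ncard = 1) :
    {p : Option (Option B) // ((opT T ℓ).neighborSet p).ncard = 1} ≃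
      Option (Option {c : B // (T.neighborSet c).ncard = 1 ∧ c ≠ ℓ}) :=
  ((optionPeel _ opT_deg_none).trans
    (Equiv.optionCongr (optionPeel _ opT_deg_some_none))).trans
    (Equiv.optionCongr (Equiv.optionCongr (Equiv.subtypeEquivRight (opT_leaf_iff hl))))

lemma extend_decomp (V : Type) [Finite V] (G : SimpleGraph V) (a b : V) (hab : a ≠ b)
    (HbN : ∀ y, G.Adj b y → y = a)
    (D' : BranchDecomp (G.induce ({b}ᶜ : Set V))) (hw : D'.widthLE 1) :
    ∃ D : BranchDecomp G, D.widthLE 1 := by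
  classical
  letI := D'.finB
  have haS : a ∈ ({b}ᶜ : Set V) := by simp [hab]
  let a' : ↥({b}ᶜ : Set V) := ⟨a, haS⟩
  let ℓ : D'.B := (D'.L.symm a').1
  have hl : (D'.T.neighborSet ℓ).ncard = 1 := (D'.L.symm a').2
  have hLl : D'.L ⟨ℓ, hl⟩ = a' := by
    show D'.L (D'.L.symm a') = a'
    exact D'.L.apply_symm_apply a'
  -- final relabeling equiv
  let fn : Option (Option {w : ↥({b}ᶜ : Set V) // w ≠ a'}) → V := fun o =>
    match o with
    | none => b
    | some none => a
    | some (some w) => w.1.1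
  have hfn : Function.Bijective fn := by
    constructor
    · rintro (_ | (_ | w)) (_ | (_ | w')) h <;> simp only [fn] at h
      · rfl
      · exact absurd h.symm hab
      · exact absurd h.symm w'.1.2
      · exact absurd h hab
      · rfl
      · exact absurd (Subtype.ext h.symm) w'.2
      · exact absurd h w.1.2
      · exact absurd (Subtype.ext h) w.2
      · exact congrArg some (congrArg some (Subtype.ext (Subtype.ext h)))
    · intro y
      by_cases hyb : y = b
      · exact ⟨none, hyb.symm⟩
      · by_cases hya : y = a
        · exact ⟨some none, hya.symm⟩
        · exact ⟨some (some ⟨⟨y, hyb⟩, fun hc => hya (congrArg Subtype.val hc)⟩), rfl⟩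
  let E4 : Option (Option {w : ↥({b}ᶜ : Set V) // w ≠ a'}) ≃ V := Equiv.ofBijective fn hfn
  have hE4n : E4 none = b := rfl
  have hE4sn : E4 (some none) = a := rfl
  let L : {p : Option (Option D'.B) //
      (((opT D'.T ℓ)).neighborSet p).ncard = 1} ≃ V :=
    ((leavesOpEquiv D'.T ℓ hl).trans
      (Equiv.optionCongr (Equiv.optionCongr
        ((leafRelabel D'.L ℓ hl).trans
          (Equiv.subtypeEquivRight (fun w => by rw [hLl])))))).trans E4
  -- the new decomposition
  refine ⟨⟨Option (Option D'.B), inferInstance, opT D'.T ℓ,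
    opT_isTree D'.isTree, ?_, L⟩, ?_⟩
  · intro p
    match p with
    | none => exact Or.inl opT_deg_none
    | some none => exact Or.inl opT_deg_some_none
    | some (some c) =>
        by_cases hc : c = ℓ
        · subst hc
          rw [opT_deg_ss_eq, hl]
          exact Or.inr rfl
        · rw [opT_deg_ss_ne hc]
          exact D'.subcubic c
  -- width bound
  · -- forward values of L
    have hLn : ∀ h, L ⟨none, h⟩ = b := fun _ => rfl
    have hLsn : ∀ h, L ⟨some none, h⟩ = a := fun _ => rfl
    have hLss : ∀ (c : D'.B) (h) (hcl : (D'.T.neighborSet c).ncard = 1),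
        L ⟨some (some c), h⟩ = (D'.L ⟨c, hcl⟩).1 := fun _ _ _ => rfl
    -- positions
    have posb : (L.symm b).1 = none := by
      have : L.symm b = ⟨none, opT_deg_none⟩ := by
        rw [Equiv.symm_apply_eq]
        exact (hLn _).symm
      rw [this]
    have posa : (L.symm a).1 = some none := by
      have : L.symm a = ⟨some none, opT_deg_some_none⟩ := by
        rw [Equiv.symm_apply_eq]
        exact (hLsn _).symm
      rw [this]
    have posy : ∀ (y : V) (hy : y ∈ ({b}ᶜ : Set V)) (_ : y ≠ a),
        (L.symm y).1 = some (some (D'.L.symm ⟨y, hy⟩).1) := by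
      intro y hy hya
      set c : D'.B := (D'.L.symm ⟨y, hy⟩).1 with hc
      have hcl : (D'.T.neighborSet c).ncard = 1 := (D'.L.symm ⟨y, hy⟩).2
      have hcne : c ≠ ℓ := by
        intro hceq
        have h1 : D'.L.symm ⟨y, hy⟩ = ⟨ℓ, hl⟩ := Subtype.ext hceq
        have h2 : (⟨y, hy⟩ : ↥({b}ᶜ : Set V)) = a' := by
          rw [← D'.L.apply_symm_apply ⟨y, hy⟩, h1, hLl]
        exact hya (congrArg Subtype.val h2)
      have hss : (((opT D'.T ℓ)).neighborSet (some (some c))).ncard = 1 := by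
        rw [opT_deg_ss_ne hcne]
        exact hcl
      have : L.symm y = ⟨some (some c), hss⟩ := by
        rw [Equiv.symm_apply_eq, hLss c hss hcl]
        show y = (D'.L (D'.L.symm ⟨y, hy⟩)).1
        rw [D'.L.apply_symm_apply]
      rw [this]
    -- membership helpers
    have memb : ∀ y : V, (L.symm y).1 = none → y = b := by
      intro y h
      have h2 : L.symm y = ⟨none, opT_deg_none⟩ := Subtype.ext h
      rw [← L.apply_symm_apply y, h2, hLn]
    have mema : ∀ y : V, (L.symm y).1 = some none → y = a := by
      intro y h
      have h2 : L.symm y = ⟨some none, opT_deg_some_none⟩ := Subtype.ext h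
      rw [← L.apply_symm_apply y, h2, hLsn]
    have hρb : ρ ℓ (L.symm b).1 = ℓ := by rw [posb]; rfl
    have hρa : ρ ℓ (L.symm a).1 = ℓ := by rw [posa]; rfl
    have hConn : D'.T.Connected := D'.isTree.isConnected
    intro p q hadj
    rcases opT_adj_cases hadj with ⟨rfl, rfl⟩ | ⟨rfl, rfl⟩ | ⟨rfl, rfl⟩ | ⟨rfl, rfl⟩ |
      ⟨u, w, hTadj, rfl, rfl⟩
    · -- pendant edge, `none` side : side = {b}
      refine star_mmVal G _ b ?_
      intro y z hy _ _
      left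
      have hy' : ((opT D'.T ℓ).deleteEdges
          {s(none, some (some ℓ))}).Reachable ((L.symm y).1) none := hy
      exact memb y (opT_reach_new2.mp hy')
    · -- pendant edge, other side : side = {b}ᶜ
      have hsw : ({s((some (some ℓ) : Option (Option D'.B)), none)} :
          Set (Sym2 (Option (Option D'.B)))) = {s(none, some (some ℓ))} := by
        rw [Sym2.eq_swap]
      refine star_mmVal G _ b ?_
      intro y z _ hz _
      right
      by_contra hzb
      apply hz
      show ((opT D'.T ℓ).deleteEdges
          {s((some (some ℓ) : Option (Option D'.B)), none)}).Reachable
          ((L.symm z).1) (some (some ℓ))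
      rw [hsw]
      refine opT_reach_new2' hConn ?_ (by simp)
      intro hc
      exact hzb (memb z hc)
    · -- second pendant edge : side = {a}
      refine star_mmVal G _ a ?_
      intro y z hy _ _
      left
      have hy' : ((opT D'.T ℓ).deleteEdges
          {s(some none, some (some ℓ))}).Reachable ((L.symm y).1) (some none) := hy
      exact mema y (opT_reach_new1.mp hy')
    · -- second pendant edge, other side : side = {a}ᶜ
      have hsw : ({s((some (some ℓ) : Option (Option D'.B)), some none)} :
          Set (Sym2 (Option (Option D'.B)))) = {s(some none, some (some ℓ))} := by
        rw [Sym2.eq_swap]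
      refine star_mmVal G _ a ?_
      intro y z _ hz _
      right
      by_contra hza
      apply hz
      show ((opT D'.T ℓ).deleteEdges
          {s((some (some ℓ) : Option (Option D'.B)), some none)}).Reachable
          ((L.symm z).1) (some (some ℓ))
      rw [hsw]
      refine opT_reach_new1' hConn ?_ (by simp)
      intro hc
      exact hza (mema z hc)
    · -- an original edge
      refine mmVal_transfer G ({b}ᶜ) _ (D'.side u w) ?_ (hw u w hTadj)
      intro y z hyA hzA hGadj
      have hy' : ((opT D'.T ℓ).deleteEdges
          {s(some (some u), some (some w))}).Reachable ((L.symm y).1) (some (some u)) := hyA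
      have hy2 : (D'.T.deleteEdges {s(u, w)}).Reachable (ρ ℓ (L.symm y).1) u := by
        have := opT_reach_old.mp hy'
        simpa using this
      have hz2 : ¬ (D'.T.deleteEdges {s(u, w)}).Reachable (ρ ℓ (L.symm z).1) u := by
        intro hc
        apply hzA
        show ((opT D'.T ℓ).deleteEdges
          {s(some (some u), some (some w))}).Reachable ((L.symm z).1) (some (some u))
        rw [opT_reach_old]
        simpa using hc
      have hyb : y ≠ b := by
        intro h
        have hza : z = a := HbN z (by rwa [h] at hGadj)
        rw [h, hρb] at hy2
        rw [hza, hρa] at hz2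
        exact hz2 hy2
      have hzb : z ≠ b := by
        intro h
        have hya : y = a := HbN y (by rw [h] at hGadj; exact hGadj.symm)
        rw [h, hρb] at hz2
        rw [hya, hρa] at hy2
        exact hz2 hy2
      have hyS : y ∈ ({b}ᶜ : Set V) := by simpa using hyb
      have hzS : z ∈ ({b}ᶜ : Set V) := by simpa using hzb
      refine ⟨hyS, hzS, ?_, ?_⟩
      · show (D'.T.deleteEdges {s(u, w)}).Reachable ((D'.L.symm ⟨y, hyS⟩).1) u
        by_cases hya : y = a
        · subst hya
          rwa [hρa] at hy2
        · rw [posy y hyS hya] at hy2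
          simpa using hy2
      · intro hc
        have hc' : (D'.T.deleteEdges {s(u, w)}).Reachable ((D'.L.symm ⟨z, hzS⟩).1) u := hc
        apply hz2
        by_cases hza : z = a
        · subst hza
          rwa [hρa]
        · rw [posy z hzS hza]
          simpa using hc'

end Extend
section Extend2
open SimpleGraph

lemma extend2_decomp (V : Type) [Finite V] (G : SimpleGraph V) (x v1 v2 : V)
    (hxv1 : G.Adj x v1) (hv1v2 : G.Adj v1 v2) (hxv2 : G.Adj x v2)
    (Nx : ∀ y, G.Adj x y → y = v1 ∨ y = v2) (Nv1 : ∀ y, G.Adj v1 y → y = x ∨ y = v2)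
    (D' : BranchDecomp (G.induce ({x, v1}ᶜ : Set V))) (hw : D'.widthLE 1) :
    ∃ D : BranchDecomp G, D.widthLE 1 := by
  classical
  letI := D'.finB
  have hxne1 : x ≠ v1 := hxv1.ne
  have hv2x : v2 ≠ x := hxv2.ne'
  have hv2v1 : v2 ≠ v1 := hv1v2.ne'
  have hv2S : v2 ∈ ({x, v1}ᶜ : Set V) := by simp [hv2x, hv2v1]
  let v2' : ↥({x, v1}ᶜ : Set V) := ⟨v2, hv2S⟩
  let ℓ : D'.B := (D'.L.symm v2').1
  have hl : (D'.T.neighborSet ℓ).ncard = 1 := (D'.L.symm v2').2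
  have hLl : D'.L ⟨ℓ, hl⟩ = v2' := by
    show D'.L (D'.L.symm v2') = v2'
    exact D'.L.apply_symm_apply v2'
  have hwS : ∀ w : {w : ↥({x, v1}ᶜ : Set V) // w ≠ v2'},
      w.1.1 ≠ x ∧ w.1.1 ≠ v1 ∧ w.1.1 ≠ v2 := by
    rintro ⟨⟨y, hy⟩, hyne⟩
    simp only [Set.mem_compl_iff, Set.mem_insert_iff, Set.mem_singleton_iff] at hy
    push_neg at hy
    exact ⟨hy.1, hy.2, fun hc => hyne (Subtype.ext hc)⟩
  -- final relabeling
  let fn : Option (Option (Option {w : ↥({x, v1}ᶜ : Set V) // w ≠ v2'})) → V := fun o =>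
    match o with
    | none => v1
    | some none => x
    | some (some none) => v2
    | some (some (some w)) => w.1.1
  have hfn : Function.Bijective fn := by
    constructor
    · rintro (_ | (_ | (_ | w))) (_ | (_ | (_ | w'))) h <;> simp only [fn] at h
      · rfl
      · exact absurd h.symm hxne1
      · exact absurd h.symm hv2v1
      · exact absurd h.symm (hwS w').2.1
      · exact absurd h hxne1
      · rfl
      · exact absurd h.symm hv2x
      · exact absurd h.symm (hwS w').1
      · exact absurd h hv2v1
      · exact absurd h hv2x
      · rfl
      · exact absurd h.symm (hwS w').2.2
      · exact absurd h (hwS w).2.1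
      · exact absurd h (hwS w).1
      · exact absurd h (hwS w).2.2
      · exact congrArg _ (congrArg _ (congrArg _ (Subtype.ext (Subtype.ext h))))
    · intro y
      by_cases hy1 : y = v1
      · exact ⟨none, hy1.symm⟩
      by_cases hy2 : y = x
      · exact ⟨some none, hy2.symm⟩
      by_cases hy3 : y = v2
      · exact ⟨some (some none), hy3.symm⟩
      · refine ⟨some (some (some ⟨⟨y, ?_⟩, fun hc => hy3 (congrArg Subtype.val hc)⟩)), rfl⟩
        simp [hy1, hy2]
  let E4 := Equiv.ofBijective fn hfn
  let L : {p : Option (Option (Option (Option D'.B))) //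
      ((opT (opT D'.T ℓ) none).neighborSet p).ncard = 1} ≃ V :=
    ((leavesOpEquiv (opT D'.T ℓ) none opT_deg_none).trans
      (Equiv.optionCongr (Equiv.optionCongr
        (((leafRelabel (leavesOpEquiv D'.T ℓ hl) none opT_deg_none).trans
          (Equiv.subtypeEquivRight (fun w => Iff.rfl))).trans
          (optionNeNone.trans
            (Equiv.optionCongr ((leafRelabel D'.L ℓ hl).trans
              (Equiv.subtypeEquivRight (fun w => by rw [hLl]))))))))).trans E4
  refine ⟨⟨Option (Option (Option (Option D'.B))), inferInstance, opT (opT D'.T ℓ) none,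
    opT_isTree (opT_isTree D'.isTree), ?_, L⟩, ?_⟩
  · intro p
    match p with
    | none => exact Or.inl opT_deg_none
    | some none => exact Or.inl opT_deg_some_none
    | some (some c') =>
        by_cases hc : c' = (none : Option (Option D'.B))
        · subst hc
          rw [opT_deg_ss_eq, opT_deg_none]
          exact Or.inr rfl
        · rw [opT_deg_ss_ne hc]
          match c' with
          | none => exact absurd rfl hc
          | some none => exact Or.inl opT_deg_some_none
          | some (some c) =>
              by_cases hcl2 : c = ℓ
              · subst hcl2
                rw [opT_deg_ss_eq, hl]
                exact Or.inr rfl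
              · rw [opT_deg_ss_ne hcl2]
                exact D'.subcubic c
  · -- width
    have degssn : ((opT (opT D'.T ℓ) none).neighborSet
        (some (some (some none)))).ncard = 1 := by
      rw [opT_deg_ss_ne (by simp)]
      exact opT_deg_some_none
    have hLn : ∀ h, L ⟨none, h⟩ = v1 := fun _ => rfl
    have hLsn : ∀ h, L ⟨some none, h⟩ = x := fun _ => rfl
    have hLssn : ∀ h, L ⟨some (some (some none)), h⟩ = v2 := fun _ => rfl
    have hLs4 : ∀ (c : D'.B) (h) (hcl : (D'.T.neighborSet c).ncard = 1),
        L ⟨some (some (some (some c))), h⟩ = (D'.L ⟨c, hcl⟩).1 := fun _ _ _ => rfl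
    have posv1 : (L.symm v1).1 = none := by
      have : L.symm v1 = ⟨none, opT_deg_none⟩ := by
        rw [Equiv.symm_apply_eq]; exact (hLn _).symm
      rw [this]
    have posx : (L.symm x).1 = some none := by
      have : L.symm x = ⟨some none, opT_deg_some_none⟩ := by
        rw [Equiv.symm_apply_eq]; exact (hLsn _).symm
      rw [this]
    have posv2 : (L.symm v2).1 = some (some (some none)) := by
      have : L.symm v2 = ⟨some (some (some none)), degssn⟩ := by
        rw [Equiv.symm_apply_eq]; exact (hLssn _).symm
      rw [this]
    have posy : ∀ (y : V) (hy : y ∈ ({x, v1}ᶜ : Set V)) (_ : y ≠ v2),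
        (L.symm y).1 = some (some (some (some (D'.L.symm ⟨y, hy⟩).1))) := by
      intro y hy hyv2
      have hcl : (D'.T.neighborSet (D'.L.symm ⟨y, hy⟩).1).ncard = 1 := (D'.L.symm ⟨y, hy⟩).2
      have hcne : (D'.L.symm ⟨y, hy⟩).1 ≠ ℓ := by
        intro hceq
        have h1 : D'.L.symm ⟨y, hy⟩ = ⟨ℓ, hl⟩ := Subtype.ext hceq
        have h2 : (⟨y, hy⟩ : ↥({x, v1}ᶜ : Set V)) = v2' := by
          rw [← D'.L.apply_symm_apply ⟨y, hy⟩, h1, hLl]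
        exact hyv2 (congrArg Subtype.val h2)
      have hss : ((opT (opT D'.T ℓ) none).neighborSet
          (some (some (some (some (D'.L.symm ⟨y, hy⟩).1))))).ncard = 1 := by
        rw [opT_deg_ss_ne (by simp), opT_deg_ss_ne hcne]
        exact hcl
      have : L.symm y = ⟨some (some (some (some (D'.L.symm ⟨y, hy⟩).1))), hss⟩ := by
        rw [Equiv.symm_apply_eq, hLs4 _ hss hcl]
        show y = (D'.L (D'.L.symm ⟨y, hy⟩)).1
        rw [D'.L.apply_symm_apply]
      rw [this]
    -- membership helpers
    have memv1 : ∀ y : V, (L.symm y).1 = none → y = v1 := by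
      intro y h
      have h2 : L.symm y = ⟨none, opT_deg_none⟩ := Subtype.ext h
      rw [← L.apply_symm_apply y, h2, hLn]
    have memx : ∀ y : V, (L.symm y).1 = some none → y = x := by
      intro y h
      have h2 : L.symm y = ⟨some none, opT_deg_some_none⟩ := Subtype.ext h
      rw [← L.apply_symm_apply y, h2, hLsn]
    have memv2 : ∀ y : V, (L.symm y).1 = some (some (some none)) → y = v2 := by
      intro y h
      have h2 : L.symm y = ⟨some (some (some none)), degssn⟩ := Subtype.ext h
      rw [← L.apply_symm_apply y, h2, hLssn]
    have hConn : D'.T.Connected := D'.isTree.isConnected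
    have hConn' : (opT D'.T ℓ).Connected := (opT_isTree D'.isTree).isConnected
    -- the inner collapse values
    have ρρv1 : ρ ℓ (ρ none (L.symm v1).1) = ℓ := by rw [posv1]; rfl
    have ρρx : ρ ℓ (ρ none (L.symm x).1) = ℓ := by rw [posx]; rfl
    have ρρv2 : ρ ℓ (ρ none (L.symm v2).1) = ℓ := by rw [posv2]; rfl
    have ρρy : ∀ (y : V) (hy : y ∈ ({x, v1}ᶜ : Set V)) (hyv2 : y ≠ v2),
        ρ ℓ (ρ none (L.symm y).1) = (D'.L.symm ⟨y, hy⟩).1 := by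
      intro y hy hyv2
      rw [posy y hy hyv2]; rfl
    have ρnv1 : ρ none (L.symm v1).1 = none := by rw [posv1]; rfl
    have ρnx : ρ none (L.symm x).1 = none := by rw [posx]; rfl
    have ρnv2 : ρ none (L.symm v2).1 = some none := by rw [posv2]; rfl
    have ρny : ∀ (y : V) (hy : y ∈ ({x, v1}ᶜ : Set V)) (hyv2 : y ≠ v2),
        ρ none (L.symm y).1 = some (some (D'.L.symm ⟨y, hy⟩).1) := by
      intro y hy hyv2
      rw [posy y hy hyv2]; rfl
    -- trichotomy helper
    have tri : ∀ y : V, y = v1 ∨ y = x ∨ y = v2 ∨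
        (y ∈ ({x, v1}ᶜ : Set V) ∧ y ≠ v2) := by
      intro y
      by_cases h1 : y = v1
      · exact Or.inl h1
      by_cases h2 : y = x
      · exact Or.inr (Or.inl h2)
      by_cases h3 : y = v2
      · exact Or.inr (Or.inr (Or.inl h3))
      · exact Or.inr (Or.inr (Or.inr ⟨by simp [h1, h2], h3⟩))
    intro p q hadj
    rcases opT_adj_cases hadj with ⟨rfl, rfl⟩ | ⟨rfl, rfl⟩ | ⟨rfl, rfl⟩ | ⟨rfl, rfl⟩ |
      ⟨p', q', hadj', rfl, rfl⟩
    · -- side {v1}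
      refine star_mmVal G _ v1 ?_
      intro y z hy _ _
      left
      have hy' : ((opT (opT D'.T ℓ) none).deleteEdges
          {s(none, some (some none))}).Reachable ((L.symm y).1) none := hy
      exact memv1 y (opT_reach_new2.mp hy')
    · -- side {v1}ᶜ
      have hsw : ({s((some (some none) : Option (Option (Option (Option D'.B)))), none)} :
          Set (Sym2 (Option (Option (Option (Option D'.B)))))) =
          {s(none, some (some none))} := by rw [Sym2.eq_swap]
      refine star_mmVal G _ v1 ?_
      intro y z _ hz _
      right
      by_contra hzv1
      apply hz
      show ((opT (opT D'.T ℓ) none).deleteEdges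
          {s((some (some none) : Option (Option (Option (Option D'.B)))), none)}).Reachable
          ((L.symm z).1) (some (some none))
      rw [hsw]
      refine opT_reach_new2' hConn' ?_ (by simp)
      intro hc
      exact hzv1 (memv1 z hc)
    · -- side {x}
      refine star_mmVal G _ x ?_
      intro y z hy _ _
      left
      have hy' : ((opT (opT D'.T ℓ) none).deleteEdges
          {s(some none, some (some none))}).Reachable ((L.symm y).1) (some none) := hy
      exact memx y (opT_reach_new1.mp hy')
    · -- side {x}ᶜ
      have hsw : ({s((some (some none) : Option (Option (Option (Option D'.B)))), some none)} :
          Set (Sym2 (Option (Option (Option (Option D'.B)))))) =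
          {s(some none, some (some none))} := by rw [Sym2.eq_swap]
      refine star_mmVal G _ x ?_
      intro y z _ hz _
      right
      by_contra hzx
      apply hz
      show ((opT (opT D'.T ℓ) none).deleteEdges
          {s((some (some none) : Option (Option (Option (Option D'.B)))), some none)}).Reachable
          ((L.symm z).1) (some (some none))
      rw [hsw]
      refine opT_reach_new1' hConn' ?_ (by simp)
      intro hc
      exact hzx (memx z hc)
    · -- image of an edge of opT D'.T ℓ
      have memA : ∀ y : V, (((opT (opT D'.T ℓ) none).deleteEdges
          {s(some (some p'), some (some q'))}).Reachable ((L.symm y).1) (some (some p'))) ↔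
          (((opT D'.T ℓ).deleteEdges {s(p', q')}).Reachable (ρ none (L.symm y).1) p') := by
        intro y
        rw [opT_reach_old]
        simp
      rcases opT_adj_cases hadj' with ⟨rfl, rfl⟩ | ⟨rfl, rfl⟩ | ⟨rfl, rfl⟩ | ⟨rfl, rfl⟩ |
        ⟨u, w, hTadj, rfl, rfl⟩
      · -- side {v1, x}
        refine star_mmVal G _ v2 ?_
        intro y z hy hz hyz
        have hy2 : ρ none (L.symm y).1 = none := opT_reach_new2.mp ((memA y).mp hy)
        have hymem : y = v1 ∨ y = x := by
          rcases tri y with h | h | h | ⟨h1, h2⟩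
          · exact Or.inl h
          · exact Or.inr h
          · rw [h, ρnv2] at hy2; exact absurd hy2 (by simp)
          · rw [ρny y h1 h2] at hy2; exact absurd hy2 (by simp)
        have hxA : ¬ ((opT (opT D'.T ℓ) none).deleteEdges
            {s(some (some (none : Option (Option D'.B))),
              some (some (some (some ℓ))))}).Reachable ((L.symm z).1)
            (some (some (none : Option (Option D'.B)))) → z ≠ v1 ∧ z ≠ x := by
          intro hzn
          constructor
          · intro hc
            apply hzn
            rw [memA z, hc, ρnv1]
          · intro hc
            apply hzn
            rw [memA z, hc, ρnx]
        obtain ⟨hz1, hz2⟩ := hxA hz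
        right
        rcases hymem with rfl | rfl
        · rcases Nv1 z hyz with h | h
          · exact absurd h hz2
          · exact h
        · rcases Nx z hyz with h | h
          · exact absurd h hz1
          · exact h
      · -- side {v1, x}ᶜ
        have hsw : ({s((some (some (some (some ℓ))) : Option (Option (Option (Option D'.B)))),
            some (some none))} : Set (Sym2 (Option (Option (Option (Option D'.B)))))) =
            {s(some (some (none : Option (Option D'.B))), some (some (some (some ℓ))))} := by
          rw [Sym2.eq_swap]
        refine star_mmVal G _ v2 ?_
        intro y z hy hz hyz
        -- membership in this side means NOT collapsing to none
        have hyR : ((opT D'.T ℓ).deleteEdges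
            {s((none : Option (Option D'.B)), some (some ℓ))}).Reachable
            (ρ none (L.symm y).1) (some (some ℓ)) := by
          have hy' : ((opT (opT D'.T ℓ) none).deleteEdges
              {s(some (some (some (some ℓ))), some (some none))}).Reachable
              ((L.symm y).1) (some (some (some (some ℓ)))) := hy
          rw [hsw] at hy'
          have := opT_reach_old.mp hy'
          simpa using this
        have hyne : y ≠ v1 ∧ y ≠ x := by
          constructor
          · intro hc
            rw [hc, ρnv1] at hyR
            exact absurd (opT_reach_new2.mp hyR.symm) (by simp)
          · intro hc
            rw [hc, ρnx] at hyR
            exact absurd (opT_reach_new2.mp hyR.symm) (by simp)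
        have hzmem : z = v1 ∨ z = x := by
          rcases tri z with h | h | h | ⟨h1, h2⟩
          · exact Or.inl h
          · exact Or.inr h
          · exfalso
            apply hz
            show ((opT (opT D'.T ℓ) none).deleteEdges
              {s(some (some (some (some ℓ))), some (some none))}).Reachable
              ((L.symm z).1) (some (some (some (some ℓ))))
            rw [hsw, opT_reach_old]
            simp only [ρ_ss]
            rw [h, ρnv2]
            exact (opT_reach_new2' hConn (by simp) (by simp))
          · exfalso
            apply hz
            show ((opT (opT D'.T ℓ) none).deleteEdges
              {s(some (some (some (some ℓ))), some (some none))}).Reachable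
              ((L.symm z).1) (some (some (some (some ℓ))))
            rw [hsw, opT_reach_old]
            simp only [ρ_ss]
            rw [ρny z h1 h2]
            exact (opT_reach_new2' hConn (by simp) (by simp))
        left
        rcases hzmem with rfl | rfl
        · rcases Nv1 y hyz.symm with h | h
          · exact absurd h hyne.2
          · exact h
        · rcases Nx y hyz.symm with h | h
          · exact absurd h hyne.1
          · exact h
      · -- side {v2}
        refine star_mmVal G _ v2 ?_
        intro y z hy _ _
        left
        have hy2 : ρ none (L.symm y).1 = some none :=
          opT_reach_new1.mp ((memA y).mp hy)
        rcases tri y with h | h | h | ⟨h1, h2⟩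
        · rw [h, ρnv1] at hy2; exact absurd hy2 (by simp)
        · rw [h, ρnx] at hy2; exact absurd hy2 (by simp)
        · exact h
        · rw [ρny y h1 h2] at hy2; exact absurd hy2 (by simp)
      · -- side {v2}ᶜ
        have hsw : ({s((some (some (some (some ℓ))) : Option (Option (Option (Option D'.B)))),
            some (some (some none)))} : Set (Sym2 (Option (Option (Option (Option D'.B)))))) =
            {s(some (some (some none)), some (some (some (some ℓ))))} := by
          rw [Sym2.eq_swap]
        refine star_mmVal G _ v2 ?_
        intro y z _ hz _
        right
        by_contra hzv2
        apply hz
        show ((opT (opT D'.T ℓ) none).deleteEdges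
            {s(some (some (some (some ℓ))), some (some (some none)))}).Reachable
            ((L.symm z).1) (some (some (some (some ℓ))))
        rw [hsw, opT_reach_old]
        simp only [ρ_ss]
        refine opT_reach_new1' hConn ?_ (by simp)
        rcases tri z with h | h | h | ⟨h1, h2⟩
        · rw [h, ρnv1]; simp
        · rw [h, ρnx]; simp
        · exact absurd h hzv2
        · rw [ρny z h1 h2]; simp
      · -- a doubly-embedded original edge : transfer
        refine mmVal_transfer G ({x, v1}ᶜ) _ (D'.side u w) ?_ (hw u w hTadj)
        intro y z hyA hzA hGadj
        have hy2 : (D'.T.deleteEdges {s(u, w)}).Reachable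
            (ρ ℓ (ρ none (L.symm y).1)) u := by
          have hy' : ((opT (opT D'.T ℓ) none).deleteEdges
              {s(some (some (some (some u))), some (some (some (some w))))}).Reachable
              ((L.symm y).1) (some (some (some (some u)))) := hyA
          have h1 := opT_reach_old.mp hy'
          simp only [ρ_ss] at h1
          have h2 := opT_reach_old.mp h1
          simpa using h2
        have hz2 : ¬ (D'.T.deleteEdges {s(u, w)}).Reachable
            (ρ ℓ (ρ none (L.symm z).1)) u := by
          intro hc
          apply hzA
          show ((opT (opT D'.T ℓ) none).deleteEdges
              {s(some (some (some (some u))), some (some (some (some w))))}).Reachable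
              ((L.symm z).1) (some (some (some (some u))))
          rw [opT_reach_old]
          simp only [ρ_ss]
          rw [opT_reach_old]
          simpa using hc
        -- y and z avoid {x, v1}
        have keyiff : ∀ t : V, t = v1 ∨ t = x ∨ t = v2 →
            (ρ ℓ (ρ none (L.symm t).1)) = ℓ := by
          rintro t (rfl | rfl | rfl)
          exacts [ρρv1, ρρx, ρρv2]
        have hyx : y ≠ x := by
          intro hc
          rcases Nx z (by rwa [hc] at hGadj) with h | h
          · rw [hc, ρρx] at hy2
            rw [h, ρρv1] at hz2
            exact hz2 hy2
          · rw [hc, ρρx] at hy2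
            rw [h, ρρv2] at hz2
            exact hz2 hy2
        have hyv1 : y ≠ v1 := by
          intro hc
          rcases Nv1 z (by rwa [hc] at hGadj) with h | h
          · rw [hc, ρρv1] at hy2
            rw [h, ρρx] at hz2
            exact hz2 hy2
          · rw [hc, ρρv1] at hy2
            rw [h, ρρv2] at hz2
            exact hz2 hy2
        have hzx : z ≠ x := by
          intro hc
          rcases Nx y (by rw [hc] at hGadj; exact hGadj.symm) with h | h
          · rw [hc, ρρx] at hz2
            rw [h, ρρv1] at hy2
            exact hz2 hy2
          · rw [hc, ρρx] at hz2
            rw [h, ρρv2] at hy2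
            exact hz2 hy2
        have hzv1 : z ≠ v1 := by
          intro hc
          rcases Nv1 y (by rw [hc] at hGadj; exact hGadj.symm) with h | h
          · rw [hc, ρρv1] at hz2
            rw [h, ρρx] at hy2
            exact hz2 hy2
          · rw [hc, ρρv1] at hz2
            rw [h, ρρv2] at hy2
            exact hz2 hy2
        have hyS : y ∈ ({x, v1}ᶜ : Set V) := by simp [hyx, hyv1]
        have hzS : z ∈ ({x, v1}ᶜ : Set V) := by simp [hzx, hzv1]
        refine ⟨hyS, hzS, ?_, ?_⟩
        · show (D'.T.deleteEdges {s(u, w)}).Reachable ((D'.L.symm ⟨y, hyS⟩).1) u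
          by_cases hyv2 : y = v2
          · subst hyv2
            rwa [ρρv2] at hy2
          · rw [ρρy y hyS hyv2] at hy2
            exact hy2
        · intro hc
          have hc' : (D'.T.deleteEdges {s(u, w)}).Reachable ((D'.L.symm ⟨z, hzS⟩).1) u := hc
          apply hz2
          by_cases hzv2 : z = v2
          · subst hzv2
            rwa [ρρv2]
          · rwa [ρρy z hzS hzv2]

end Extend2
section Bases
open SimpleGraph

lemma mmVal_small {V : Type} [Finite V] (G : SimpleGraph V) (hV : Nat.card V ≤ 3)
    (A : Set V) : mmVal G A ≤ 1 := by
  classical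
  refine mmVal_le_of_forall G A 1 ?_
  intro M h1 h2
  by_contra hM
  push_neg at hM
  obtain ⟨p, hp, q, hq, hpq⟩ := Finset.one_lt_card.mp hM
  obtain ⟨hp1, hp2, hp3⟩ := h1 p hp
  obtain ⟨hq1, hq2, hq3⟩ := h1 q hq
  obtain ⟨hne1, hne2⟩ := h2 p hp q hq hpq
  have : Fintype V := Fintype.ofFinite V
  have hcard : ({p.1, q.1, p.2, q.2} : Finset V).card = 4 := by
    rw [Finset.card_insert_of_notMem, Finset.card_insert_of_notMem,
      Finset.card_insert_of_notMem, Finset.card_singleton]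
    · simp only [Finset.mem_singleton]
      exact hne2
    · simp only [Finset.mem_insert, Finset.mem_singleton]
      push_neg
      exact ⟨fun h => hp2 (h ▸ hq1), fun h => hq2 (h ▸ hq1)⟩
    · simp only [Finset.mem_insert, Finset.mem_singleton]
      push_neg
      exact ⟨hne1, fun h => hp2 (h ▸ hp1), fun h => hq2 (h ▸ hp1)⟩
  have h4 : ({p.1, q.1, p.2, q.2} : Finset V).card ≤ Fintype.card V :=
    Finset.card_le_univ _
  rw [hcard] at h4
  rw [Nat.card_eq_fintype_card] at hV
  omega

lemma top_bool_isTree : (⊤ : SimpleGraph Bool).IsTree := by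
  constructor
  · constructor
    intro a b
    by_cases h : a = b
    · rw [h]
    · exact (SimpleGraph.top_adj a b |>.mpr h).reachable
  · intro v c hc
    have h1 := hc.three_le_length
    have h2 : c.support.tail.Nodup := hc.support_nodup
    have h3 : c.support.tail.length = c.length := by
      rw [List.length_tail, SimpleGraph.Walk.length_support]
      omega
    have := List.Nodup.length_le_card h2
    simp only [Fintype.card_bool] at this
    omega

lemma top_bool_deg (b : Bool) : ((⊤ : SimpleGraph Bool).neighborSet b).ncard = 1 := by
  have : (⊤ : SimpleGraph Bool).neighborSet b = {!b} := by
    ext c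
    cases b <;> cases c <;> simp [SimpleGraph.neighborSet]
  rw [this, Set.ncard_singleton]

lemma base2 (V : Type) [Finite V] (G : SimpleGraph V) (hV : Nat.card V = 2) :
    ∃ D : BranchDecomp G, D.widthLE 1 := by
  classical
  have : Fintype V := Fintype.ofFinite V
  have hc2 : Fintype.card V = 2 := by rw [← Nat.card_eq_fintype_card, hV]
  let e : V ≃ Fin 2 := Fintype.equivFinOfCardEq hc2
  refine ⟨⟨Bool, inferInstance, ⊤, top_bool_isTree, fun b => Or.inl (top_bool_deg b),
    (Equiv.subtypeUnivEquiv top_bool_deg).trans (finTwoEquiv.symm.trans e.symm)⟩, ?_⟩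
  intro u w _
  exact mmVal_small G (by omega) _

lemma base3 (V : Type) [Finite V] (G : SimpleGraph V) (hV : Nat.card V = 3) :
    ∃ D : BranchDecomp G, D.widthLE 1 := by
  classical
  have : Fintype V := Fintype.ofFinite V
  have hc3 : Fintype.card V = 3 := by rw [← Nat.card_eq_fintype_card, hV]
  let e : V ≃ Fin 3 := Fintype.equivFinOfCardEq hc3
  let y1 := e.symm 0
  let y2 := e.symm 1
  let y3 := e.symm 2
  have hy12 : y1 ≠ y2 := fun h => by simpa [y1, y2] using e.symm.injective h
  have hy13 : y1 ≠ y3 := fun h => by simpa [y1, y3] using e.symm.injective h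
  have hy23 : y2 ≠ y3 := fun h => by simpa [y2, y3] using e.symm.injective h
  have hcover : ∀ y : V, y = y1 ∨ y = y2 ∨ y = y3 := by
    intro y
    have h3 : (e y).val < 3 := (e y).2
    have h4 : (e y).val = 0 ∨ (e y).val = 1 ∨ (e y).val = 2 := by omega
    have : e y = 0 ∨ e y = 1 ∨ e y = 2 := by
      rcases h4 with h | h | h
      · exact Or.inl (Fin.ext h)
      · exact Or.inr (Or.inl (Fin.ext h))
      · exact Or.inr (Or.inr (Fin.ext h))
    rcases this with h | h | h
    · exact Or.inl (by rw [← e.symm_apply_apply y, h])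
    · exact Or.inr (Or.inl (by rw [← e.symm_apply_apply y, h]))
    · exact Or.inr (Or.inr (by rw [← e.symm_apply_apply y, h]))
  have hsn : ((opT (⊤ : SimpleGraph Bool) true).neighborSet (some (some false))).ncard = 1 := by
    rw [opT_deg_ss_ne (by simp)]
    exact top_bool_deg false
  have hst : ((opT (⊤ : SimpleGraph Bool) true).neighborSet (some (some true))).ncard = 3 := by
    rw [opT_deg_ss_eq, top_bool_deg]
  let fn : {p : Option (Option Bool) //
      ((opT (⊤ : SimpleGraph Bool) true).neighborSet p).ncard = 1} → V := fun ⟨p, hp⟩ =>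
    match p, hp with
    | none, _ => y1
    | some none, _ => y2
    | some (some false), _ => y3
    | some (some true), hp => absurd hp (by rw [hst]; omega)
  have hfn : Function.Bijective fn := by
    constructor
    · rintro ⟨p, hp⟩ ⟨p', hp'⟩ h
      dsimp only [fn] at h
      match p, hp, p', hp', h with
      | some (some true), hp, _, _, _ => rw [hst] at hp; omega
      | none, _, some (some true), hp', _ => rw [hst] at hp'; omega
      | some none, _, some (some true), hp', _ => rw [hst] at hp'; omega
      | some (some false), _, some (some true), hp', _ => rw [hst] at hp'; omega
      | none, _, none, _, _ => rfl
      | none, _, some none, _, h => exact absurd h hy12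
      | none, _, some (some false), _, h => exact absurd h hy13
      | some none, _, none, _, h => exact absurd h.symm hy12
      | some none, _, some none, _, _ => rfl
      | some none, _, some (some false), _, h => exact absurd h hy23
      | some (some false), _, none, _, h => exact absurd h.symm hy13
      | some (some false), _, some none, _, h => exact absurd h.symm hy23
      | some (some false), _, some (some false), _, _ => rfl
    · intro y
      rcases hcover y with rfl | rfl | rfl
      · exact ⟨⟨none, opT_deg_none⟩, rfl⟩
      · exact ⟨⟨some none, opT_deg_some_none⟩, rfl⟩
      · exact ⟨⟨some (some false), hsn⟩, rfl⟩
  refine ⟨⟨Option (Option Bool), inferInstance, opT (⊤ : SimpleGraph Bool) true,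
    opT_isTree top_bool_isTree, ?_, Equiv.ofBijective fn hfn⟩, ?_⟩
  · intro p
    match p with
    | none => exact Or.inl opT_deg_none
    | some none => exact Or.inl opT_deg_some_none
    | some (some false) => exact Or.inl hsn
    | some (some true) => exact Or.inr hst
  · intro u w _
    exact mmVal_small G (by omega) _

end Bases
section Struct
open SimpleGraph

lemma adj_of_edge {V : Type} {G : SimpleGraph V} {a b : V} {u v : V} {p : G.Walk u v}
    (h : s(a, b) ∈ p.edges) : G.Adj a b :=
  p.adj_of_mem_edges h

lemma struct_lemma (V : Type) [Finite V] (G : SimpleGraph V)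
    (hC : ∀ (u : V) (c : G.Walk u u), c.IsCycle → c.length ≤ 3)
    (a0 b0 : V) (hab0 : G.Adj a0 b0) :
    (∃ a b, G.Adj a b ∧ ∀ y, G.Adj b y → y = a) ∨
    (∃ x v1 v2, G.Adj x v1 ∧ G.Adj v1 v2 ∧ G.Adj x v2 ∧
      (∀ y, G.Adj x y → y = v1 ∨ y = v2) ∧ (∀ y, G.Adj v1 y → y = x ∨ y = v2)) := by
  classical
  have : Fintype V := Fintype.ofFinite V
  set PL : Set ℕ := {n | ∃ (x y : V) (p : G.Walk x y), p.IsPath ∧ p.length = n} with hPL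
  have h1mem : 1 ∈ PL := by
    refine ⟨a0, b0, SimpleGraph.Walk.cons hab0 SimpleGraph.Walk.nil, ?_, rfl⟩
    rw [SimpleGraph.Walk.cons_isPath_iff]
    exact ⟨SimpleGraph.Walk.IsPath.nil, by simp [hab0.ne]⟩
  have hbdd : BddAbove PL := by
    refine ⟨Fintype.card V, ?_⟩
    rintro n ⟨x, y, p, hp, rfl⟩
    have h1 : p.support.length = p.length + 1 := SimpleGraph.Walk.length_support p
    have h2 := List.Nodup.length_le_card hp.support_nodup
    omega
  set N := sSup PL with hN
  have hNmem : N ∈ PL := Nat.sSup_mem ⟨1, h1mem⟩ hbdd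
  have hNmax : ∀ (x y : V) (p : G.Walk x y), p.IsPath → p.length ≤ N :=
    fun x y p hp => le_csSup hbdd ⟨x, y, p, hp, rfl⟩
  have hN1 : 1 ≤ N := le_csSup hbdd h1mem
  obtain ⟨x, y, p, hp, hplen⟩ := hNmem
  -- decompose the first step
  cases p with
  | nil => simp at hplen; omega
  | @cons _ v1 _ h1 p1 =>
    rw [SimpleGraph.Walk.cons_isPath_iff] at hp
    obtain ⟨hp1, hxp1⟩ := hp
    -- every neighbor of x is on the path
    have hnbr : ∀ u, G.Adj x u → u ∈ (SimpleGraph.Walk.cons h1 p1).support := by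
      intro u hu
      by_contra hus
      have hlong : (SimpleGraph.Walk.cons hu.symm (SimpleGraph.Walk.cons h1 p1)).IsPath := by
        rw [SimpleGraph.Walk.cons_isPath_iff]
        refine ⟨?_, hus⟩
        rw [SimpleGraph.Walk.cons_isPath_iff]
        exact ⟨hp1, hxp1⟩
      have := hNmax _ _ _ hlong
      simp only [SimpleGraph.Walk.length_cons] at this hplen
      omega
    cases p1 with
    | nil =>
        -- pendant vertex x
        left
        refine ⟨_, x, h1.symm, ?_⟩
        intro u hu
        have hmem := hnbr u hu
        simp only [SimpleGraph.Walk.support_cons, SimpleGraph.Walk.support_nil,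
          List.mem_cons, List.not_mem_nil, or_false] at hmem
        rcases hmem with h | h
        · exact absurd h hu.ne'
        · exact h
    | @cons _ v2 _ h2 p2 =>
      rw [SimpleGraph.Walk.cons_isPath_iff] at hp1
      obtain ⟨hp2, hv1p2⟩ := hp1
      have hxv1 : x ≠ v1 := h1.ne
      have hv1v2 : v1 ≠ v2 := h2.ne
      have hxsup : x ∉ (SimpleGraph.Walk.cons h2 p2).support := hxp1
      have hv2sup : v2 ∈ (SimpleGraph.Walk.cons h2 p2).support := by
        rw [SimpleGraph.Walk.support_cons]
        exact List.mem_cons_of_mem _ p2.start_mem_support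
      have hxv2 : x ≠ v2 := fun hc => hxsup (hc ▸ hv2sup)
      have hxp2 : x ∉ p2.support := by
        intro hc
        apply hxsup
        rw [SimpleGraph.Walk.support_cons]
        exact List.mem_cons_of_mem _ hc
      -- edges of the path incident to x
      have edge_x : ∀ u', s(x, u') ∈ (SimpleGraph.Walk.cons h1
          (SimpleGraph.Walk.cons h2 p2)).edges → u' = v1 := by
        intro u' hu'
        rw [SimpleGraph.Walk.edges_cons, List.mem_cons] at hu'
        rcases hu' with h | h
        · rw [Sym2.eq_iff] at h
          rcases h with ⟨_, h⟩ | ⟨h1', h2'⟩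
          · exact h
          · exact absurd h1' hxv1
        · exact absurd (SimpleGraph.Walk.fst_mem_support_of_mem_edges _ h) hxsup
      -- edges of the tail incident to v1
      have edge_v1 : ∀ u', s(v1, u') ∈ (SimpleGraph.Walk.cons h2 p2).edges → u' = v2 := by
        intro u' hu'
        rw [SimpleGraph.Walk.edges_cons, List.mem_cons] at hu'
        rcases hu' with h | h
        · rw [Sym2.eq_iff] at h
          rcases h with ⟨_, h⟩ | ⟨h1', h2'⟩
          · exact h
          · exact absurd h1' hv1v2
        · exact absurd (SimpleGraph.Walk.fst_mem_support_of_mem_edges _ h) hv1p2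
      -- Claim: every neighbor of x is v1 or v2
      have CLA : ∀ u, G.Adj x u → u = v1 ∨ u = v2 := by
        intro u hu
        by_contra hcon
        push_neg at hcon
        obtain ⟨huv1, huv2⟩ := hcon
        have hus := hnbr u hu
        set p : G.Walk x y := SimpleGraph.Walk.cons h1 (SimpleGraph.Walk.cons h2 p2) with hpdef
        have hppath : p.IsPath := by
          rw [hpdef, SimpleGraph.Walk.cons_isPath_iff, SimpleGraph.Walk.cons_isPath_iff]
          exact ⟨⟨hp2, hv1p2⟩, hxsup⟩
        have hq := hppath.takeUntil hus
        have hqe := SimpleGraph.Walk.edges_takeUntil_subset p hus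
        have hcyc : (SimpleGraph.Walk.cons hu (p.takeUntil u hus).reverse).IsCycle := by
          rw [SimpleGraph.Walk.cons_isCycle_iff]
          refine ⟨hq.reverse, ?_⟩
          rw [SimpleGraph.Walk.edges_reverse, List.mem_reverse]
          intro hmem
          exact huv1 (edge_x u (hqe hmem))
        have hlen3 := hC x _ hcyc
        rw [SimpleGraph.Walk.length_cons, SimpleGraph.Walk.length_reverse] at hlen3
        -- analyze the takeUntil walk of length ≤ 2
        set q : G.Walk x u := p.takeUntil u hus with hqdef
        clear_value q
        have hqe2 : q.edges ⊆ p.edges := hqe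
        have hql : q.length ≤ 2 := by omega
        have hune : u ≠ x := hu.ne'
        cases hq2 : q with
        | nil => exact absurd rfl hune
        | @cons _ m _ hma q1 =>
            have hmv1 : m = v1 := by
              apply edge_x
              apply hqe2
              rw [hq2, SimpleGraph.Walk.edges_cons]
              exact List.mem_cons_self
            cases q1 with
            | nil =>
                -- q is a single edge x-u, so u = v1, contradiction
                apply huv1
                apply edge_x
                apply hqe2
                rw [hq2, SimpleGraph.Walk.edges_cons]
                exact List.mem_cons_self
            | @cons _ m2 _ hmm2 q2 =>
                have hm2u : m2 = u := by
                  cases q2 with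
                  | nil => rfl
                  | cons h3 q3 =>
                      rw [hq2] at hql
                      simp only [SimpleGraph.Walk.length_cons] at hql
                      omega
                -- second edge s(m, m2) = s(v1, u)
                have hedge2 : s(v1, u) ∈ p.edges := by
                  apply hqe2
                  rw [hq2, SimpleGraph.Walk.edges_cons, SimpleGraph.Walk.edges_cons]
                  have heq : s(v1, u) = s(m, m2) := by rw [hmv1, hm2u]
                  rw [heq]
                  exact List.mem_cons_of_mem _ (List.mem_cons_self)
                rw [hpdef, SimpleGraph.Walk.edges_cons, List.mem_cons] at hedge2
                rcases hedge2 with h | h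
                · rw [Sym2.eq_iff] at h
                  rcases h with ⟨h1', _⟩ | ⟨_, h2'⟩
                  · exact absurd h1'.symm hxv1
                  · exact hune h2'
                · exact huv2 (edge_v1 u h)
      by_cases hxv2adj : G.Adj x v2
      · -- triangle case : need neighbors of v1
        right
        have CLB : ∀ u, G.Adj v1 u → u = x ∨ u = v2 := by
          intro u hu
          by_contra hcon
          push_neg at hcon
          obtain ⟨hux, huv2⟩ := hcon
          have huv1 : u ≠ v1 := hu.ne'
          by_cases hus : u ∈ p2.support
          · -- build a cycle through v1
            have hus' : u ∈ (SimpleGraph.Walk.cons h2 p2).support := by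
              rw [SimpleGraph.Walk.support_cons]
              exact List.mem_cons_of_mem _ hus
            set p1' : G.Walk v1 y := SimpleGraph.Walk.cons h2 p2 with hp1def
            have hp1path : p1'.IsPath := by
              rw [hp1def, SimpleGraph.Walk.cons_isPath_iff]
              exact ⟨hp2, hv1p2⟩
            have hq := hp1path.takeUntil hus'
            have hqe := SimpleGraph.Walk.edges_takeUntil_subset p1' hus'
            have hcyc : (SimpleGraph.Walk.cons hu (p1'.takeUntil u hus').reverse).IsCycle := by
              rw [SimpleGraph.Walk.cons_isCycle_iff]
              refine ⟨hq.reverse, ?_⟩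
              rw [SimpleGraph.Walk.edges_reverse, List.mem_reverse]
              intro hmem
              exact huv2 (edge_v1 u (hqe hmem))
            have hlen3 := hC v1 _ hcyc
            rw [SimpleGraph.Walk.length_cons, SimpleGraph.Walk.length_reverse] at hlen3
            set q : G.Walk v1 u := p1'.takeUntil u hus' with hqdef
            clear_value q
            have hqe2 : q.edges ⊆ p1'.edges := hqe
            have hql : q.length ≤ 2 := by omega
            cases hq2 : q with
            | nil => exact absurd rfl huv1
            | @cons _ m _ hma q1 =>
                have hmv2 : m = v2 := by
                  apply edge_v1
                  apply hqe2
                  rw [hq2, SimpleGraph.Walk.edges_cons]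
                  exact List.mem_cons_self
                cases q1 with
                | nil =>
                    apply huv2
                    apply edge_v1
                    apply hqe2
                    rw [hq2, SimpleGraph.Walk.edges_cons]
                    exact List.mem_cons_self
                | @cons _ m2 _ hmm2 q2 =>
                    have hm2u : m2 = u := by
                      cases q2 with
                      | nil => rfl
                      | cons h3 q3 =>
                          rw [hq2] at hql
                          simp only [SimpleGraph.Walk.length_cons] at hql
                          omega
                    -- u is adjacent to v2 : we get a 4-cycle x v1 u v2 x
                    have huv2adj : G.Adj v2 u := by
                      have hme : G.Adj m m2 := hmm2
                      rwa [hmv2, hm2u] at hme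
                    have hv2x' : G.Adj v2 x := hxv2adj.symm
                    have hc4 : (SimpleGraph.Walk.cons h1
                        (SimpleGraph.Walk.cons hu
                          (SimpleGraph.Walk.cons huv2adj.symm
                            (SimpleGraph.Walk.cons hv2x'
                              SimpleGraph.Walk.nil)))).IsCycle := by
                      rw [SimpleGraph.Walk.cons_isCycle_iff]
                      constructor
                      · rw [SimpleGraph.Walk.cons_isPath_iff,
                          SimpleGraph.Walk.cons_isPath_iff, SimpleGraph.Walk.cons_isPath_iff]
                        refine ⟨⟨⟨SimpleGraph.Walk.IsPath.nil, by simp [hxv2adj.ne']⟩, ?_⟩, ?_⟩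
                        · simp only [SimpleGraph.Walk.support_cons,
                            SimpleGraph.Walk.support_nil, List.mem_cons, List.not_mem_nil,
                            or_false]
                          push_neg
                          exact ⟨huv2, hux⟩
                        · simp only [SimpleGraph.Walk.support_cons,
                            SimpleGraph.Walk.support_nil, List.mem_cons, List.not_mem_nil,
                            or_false]
                          push_neg
                          exact ⟨huv1.symm, hv1v2, hxv1.symm⟩
                      · simp only [SimpleGraph.Walk.edges_cons, SimpleGraph.Walk.edges_nil,
                          List.mem_cons, List.not_mem_nil, or_false]
                        push_neg
                        refine ⟨?_, ?_, ?_⟩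
                        · intro h
                          rw [Sym2.eq_iff] at h
                          rcases h with ⟨hh1, hh2⟩ | ⟨hh1, hh2⟩
                          · exact hxv1 hh1
                          · exact hux hh1.symm
                        · intro h
                          rw [Sym2.eq_iff] at h
                          rcases h with ⟨hh1, hh2⟩ | ⟨hh1, hh2⟩
                          · exact hux hh1.symm
                          · exact hxv2 hh1
                        · intro h
                          rw [Sym2.eq_iff] at h
                          rcases h with ⟨hh1, hh2⟩ | ⟨hh1, hh2⟩
                          · exact hxv2 hh1
                          · exact hv1v2 hh2
                    have := hC x _ hc4
                    simp only [SimpleGraph.Walk.length_cons,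
                      SimpleGraph.Walk.length_nil] at this
                    omega
          · -- u off the path : extend to a longer path
            have hlong : (SimpleGraph.Walk.cons hu.symm
                (SimpleGraph.Walk.cons h1.symm
                  (SimpleGraph.Walk.cons hxv2adj p2))).IsPath := by
              rw [SimpleGraph.Walk.cons_isPath_iff, SimpleGraph.Walk.cons_isPath_iff,
                SimpleGraph.Walk.cons_isPath_iff]
              refine ⟨⟨⟨hp2, hxp2⟩, ?_⟩, ?_⟩
              · simp only [SimpleGraph.Walk.support_cons, List.mem_cons]
                push_neg
                exact ⟨hxv1.symm, hv1p2⟩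
              · simp only [SimpleGraph.Walk.support_cons, List.mem_cons]
                push_neg
                refine ⟨huv1, hux, ?_⟩
                intro hc
                exact hus hc
            have := hNmax _ _ _ hlong
            rw [← hplen] at this
            simp only [SimpleGraph.Walk.length_cons] at this
            omega
        exact ⟨x, v1, v2, h1, h2, hxv2adj, CLA, CLB⟩
      · -- pendant : neighbors of x are only v1
        left
        refine ⟨v1, x, h1.symm, ?_⟩
        intro u hu
        rcases CLA u hu with h | h
        · exact h
        · rw [h] at hu
          exact absurd hu hxv2adj
end Struct
section Main
open SimpleGraph

lemma cycle_bound_induce {V : Type} [Finite V] (G : SimpleGraph V)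
    (hC : ∀ (u : V) (c : G.Walk u u), c.IsCycle → c.length ≤ 3) (S : Set V) :
    ∀ (u : ↥S) (c : (G.induce S).Walk u u), c.IsCycle → c.length ≤ 3 := by
  intro u c hc
  have hf : Function.Injective (⇑(SimpleGraph.Embedding.induce S (G := G)).toHom) :=
    (SimpleGraph.Embedding.induce S (G := G)).injective
  have := hC _ _ (hc.map hf)
  rwa [SimpleGraph.Walk.length_map] at this

lemma card_compl_singleton {V : Type} [Finite V] (b : V) :
    Nat.card ↥({b}ᶜ : Set V) = Nat.card V - 1 := by
  rw [Nat.card_coe_set_eq]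
  have h := Set.ncard_add_ncard_compl ({b} : Set V)
  rw [Set.ncard_singleton] at h
  omega

lemma card_compl_pair {V : Type} [Finite V] {x v1 : V} (hne : x ≠ v1) :
    Nat.card ↥({x, v1}ᶜ : Set V) = Nat.card V - 2 := by
  rw [Nat.card_coe_set_eq]
  have h := Set.ncard_add_ncard_compl ({x, v1} : Set V)
  rw [Set.ncard_pair hne] at h
  omega

lemma main_decomp : ∀ (n : ℕ) (V : Type) [Finite V] (G : SimpleGraph V),
    Nat.card V = n → 2 ≤ n →
    (∀ (u : V) (c : G.Walk u u), c.IsCycle → c.length ≤ 3) →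
    ∃ D : BranchDecomp G, D.widthLE 1 := by
  intro n
  induction n using Nat.strong_induction_on with
  | _ n ih =>
    intro V _ G hcard hn hC
    by_cases h2 : n = 2
    · exact base2 V G (h2 ▸ hcard)
    by_cases h3 : n = 3
    · exact base3 V G (h3 ▸ hcard)
    have hn4 : 4 ≤ n := by omega
    by_cases hE : ∃ a b, G.Adj a b
    · obtain ⟨a0, b0, hab0⟩ := hE
      rcases struct_lemma V G hC a0 b0 hab0 with
        ⟨a, b, hab, HbN⟩ | ⟨x, v1, v2, hxv1, hv1v2, hxv2, Nx, Nv1⟩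
      · -- pendant b at a
        have hcard' : Nat.card ↥({b}ᶜ : Set V) = n - 1 := by
          rw [card_compl_singleton, hcard]
        obtain ⟨D', hw⟩ := ih (n - 1) (by omega) ↥({b}ᶜ : Set V) (G.induce ({b}ᶜ : Set V))
          hcard' (by omega) (cycle_bound_induce G hC _)
        exact extend_decomp V G a b hab.ne HbN D' hw
      · -- pendant triangle
        have hcard' : Nat.card ↥({x, v1}ᶜ : Set V) = n - 2 := by
          rw [card_compl_pair hxv1.ne, hcard]
        obtain ⟨D', hw⟩ := ih (n - 2) (by omega) ↥({x, v1}ᶜ : Set V)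
          (G.induce ({x, v1}ᶜ : Set V)) hcard' (by omega) (cycle_bound_induce G hC _)
        exact extend2_decomp V G x v1 v2 hxv1 hv1v2 hxv2 Nx Nv1 D' hw
    · -- no edges at all
      push_neg at hE
      have : Nontrivial V := by
        rw [← Finite.one_lt_card_iff_nontrivial]
        omega
      obtain ⟨a, b, hab⟩ := exists_pair_ne V
      have hcard' : Nat.card ↥({b}ᶜ : Set V) = n - 1 := by
        rw [card_compl_singleton, hcard]
      obtain ⟨D', hw⟩ := ih (n - 1) (by omega) ↥({b}ᶜ : Set V) (G.induce ({b}ᶜ : Set V))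
        hcard' (by omega) (cycle_bound_induce G hC _)
      exact extend_decomp V G a b hab (fun y hy => absurd hy (hE b y)) D' hw

end Main
section Finale
open SimpleGraph

lemma no_decomp {V : Type} [Finite V] (hV : Nat.card V ≤ 1) (G : SimpleGraph V)
    (D : BranchDecomp G) : False := by
  classical
  letI := D.finB
  letI : Fintype D.B := Fintype.ofFinite _
  letI : DecidableRel D.T.Adj := Classical.decRel _
  have hne : Nonempty D.B := D.isTree.isConnected.nonempty
  have hedge : D.T.edgeFinset.card + 1 = Fintype.card D.B := D.isTree.card_edgeFinset
  have hsum : ∑ v : D.B, D.T.degree v = 2 * D.T.edgeFinset.card :=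
    D.T.sum_degrees_eq_twice_card_edges
  have hdeg : ∀ b, D.T.degree b = (D.T.neighborSet b).ncard := by
    intro b
    rw [Set.ncard_eq_toFinset_card']
    rfl
  have hleafcard : Fintype.card {b : D.B // (D.T.neighborSet b).ncard = 1} = Nat.card V := by
    rw [← Nat.card_eq_fintype_card]
    exact Nat.card_congr D.L
  have hfilter : (Finset.univ.filter (fun b : D.B =>
      (D.T.neighborSet b).ncard = 1)).card ≤ 1 := by
    rw [← Fintype.card_subtype]
    omega
  have hsplit := Finset.sum_filter_add_sum_filter_not Finset.univ
    (fun b : D.B => (D.T.neighborSet b).ncard = 1) (fun b => D.T.degree b)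
  have h1 : ∑ b ∈ Finset.univ.filter (fun b : D.B => (D.T.neighborSet b).ncard = 1),
      D.T.degree b = (Finset.univ.filter (fun b : D.B =>
        (D.T.neighborSet b).ncard = 1)).card := by
    have hterm : ∀ b ∈ Finset.univ.filter (fun b : D.B => (D.T.neighborSet b).ncard = 1),
        D.T.degree b = 1 := fun b hb => by
      rw [hdeg]
      exact (Finset.mem_filter.mp hb).2
    rw [Finset.sum_congr rfl hterm, Finset.sum_const, smul_eq_mul, mul_one]
  have h3 : ∑ b ∈ Finset.univ.filter (fun b : D.B => ¬ (D.T.neighborSet b).ncard = 1),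
      D.T.degree b = 3 * (Finset.univ.filter (fun b : D.B =>
        ¬ (D.T.neighborSet b).ncard = 1)).card := by
    have hterm : ∀ b ∈ Finset.univ.filter (fun b : D.B => ¬ (D.T.neighborSet b).ncard = 1),
        D.T.degree b = 3 := fun b hb => by
      rw [hdeg]
      rcases D.subcubic b with h | h
      · exact absurd h (Finset.mem_filter.mp hb).2
      · exact h
    rw [Finset.sum_congr rfl hterm, Finset.sum_const, smul_eq_mul, mul_comm]
  have hcards := Finset.card_filter_add_card_filter_not
    (s := (Finset.univ : Finset D.B))
    (p := fun b : D.B => (D.T.neighborSet b).ncard = 1)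
  rw [Finset.card_univ] at hcards
  have hBpos : 1 ≤ Fintype.card D.B := Fintype.card_pos
  rw [h1, h3] at hsplit
  omega

lemma end_mem_tail {V : Type} {G : SimpleGraph V} {u v : V} (p : G.Walk u v)
    (h : ¬ p.Nil) : v ∈ p.support.tail := by
  cases p with
  | nil => exact absurd SimpleGraph.Walk.nil_nil h
  | cons h' q =>
      rw [SimpleGraph.Walk.support_cons]
      exact q.end_mem_support

lemma walk_conn {V : Type} (G : SimpleGraph V) :
    ∀ {y z : V} (d : G.Walk y z), d.IsPath → ∀ (A : Set V),
      (∀ v ∈ d.support, v ≠ z → v ∈ A) → ∀ (hy : y ∈ A),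
      ∀ v, v ∈ d.support → ∀ (hvA : v ∈ A),
        (G.induce A).Reachable ⟨v, hvA⟩ ⟨y, hy⟩ := by
  intro y z d
  induction d with
  | nil =>
      intro _ A _ hy v hv hvA
      simp only [SimpleGraph.Walk.support_nil, List.mem_singleton] at hv
      subst hv
      exact SimpleGraph.Reachable.refl _
  | @cons y w z h d ih =>
      intro hd A hsupp hy v hv hvA
      rw [SimpleGraph.Walk.support_cons, List.mem_cons] at hv
      rcases hv with rfl | hv
      · exact SimpleGraph.Reachable.refl _
      · by_cases hwz : w = z
        · subst hwz
          have hd' : d.IsPath := ((SimpleGraph.Walk.cons_isPath_iff _ _).mp hd).1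
          have hdnil : d = SimpleGraph.Walk.nil :=
            SimpleGraph.Walk.isPath_iff_eq_nil.mp hd'
          subst hdnil
          simp only [SimpleGraph.Walk.support_nil, List.mem_singleton] at hv
          subst hv
          have hadj : (G.induce A).Adj ⟨v, hvA⟩ ⟨y, hy⟩ := h.symm
          exact hadj.reachable
        · have hwsup : w ∈ (SimpleGraph.Walk.cons h d).support := by
            rw [SimpleGraph.Walk.support_cons]
            exact List.mem_cons_of_mem _ d.start_mem_support
          have hwA : w ∈ A := hsupp w hwsup hwz
          have hd' : d.IsPath := ((SimpleGraph.Walk.cons_isPath_iff _ _).mp hd).1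
          have hr := ih hd' A (fun u hu huz => hsupp u (by
            rw [SimpleGraph.Walk.support_cons]
            exact List.mem_cons_of_mem _ hu) huz) hwA v hv hvA
          refine hr.trans ?_
          have hadj : (G.induce A).Adj ⟨w, hwA⟩ ⟨y, hy⟩ := h.symm
          exact hadj.reachable

lemma blocks_no_long_cycle {V : Type} [Finite V] (G : SimpleGraph V)
    (h : ∀ Bs : Set V, IsBlock G Bs →
      (∃ a b : V, a ≠ b ∧ G.Adj a b ∧ Bs = {a, b}) ∨
      (∃ a b c : V, a ≠ b ∧ a ≠ c ∧ b ≠ c ∧ G.Adj a b ∧ G.Adj b c ∧ G.Adj a c ∧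
        Bs = {a, b, c})) :
    ∀ (u : V) (c : G.Walk u u), c.IsCycle → c.length ≤ 3 := by
  classical
  intro u c hc
  by_contra hlen
  push_neg at hlen
  set S0 : Set V := {v | v ∈ c.support} with hS0
  have hS0fin : S0.Finite := Set.toFinite _
  have htail : c.support.tail.toFinset.card = c.length := by
    rw [List.toFinset_card_of_nodup hc.support_nodup, List.length_tail,
      SimpleGraph.Walk.length_support]
    omega
  have hcard4 : 4 ≤ S0.ncard := by
    have hsub : ↑c.support.tail.toFinset ⊆ S0 := by
      intro v hv
      rw [Finset.mem_coe, List.mem_toFinset] at hv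
      exact List.mem_of_mem_tail hv
    have hle := Set.ncard_le_ncard hsub hS0fin
    rw [Set.ncard_coe_finset] at hle
    omega
  have hK : KConnected 2 (G.induce S0) := by
    constructor
    · rw [Nat.card_coe_set_eq]
      omega
    · intro X hX
      obtain ⟨x0, hXsub⟩ : ∃ x0 : ↥S0, X ⊆ {x0} := by
        have hcases : X.ncard = 0 ∨ X.ncard = 1 := by omega
        rcases hcases with hn | hn
        · refine ⟨⟨u, c.start_mem_support⟩, ?_⟩
          rw [Set.ncard_eq_zero (Set.toFinite _)] at hn
          rw [hn]
          exact Set.empty_subset _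
        · obtain ⟨x0, hx0⟩ := Set.ncard_eq_one.mp hn
          exact ⟨x0, by rw [hx0]⟩
      have hx0sup : (x0 : V) ∈ c.support := x0.2
      set c' := c.rotate _ hx0sup with hc'def
      clear_value c'
      have hc' : c'.IsCycle := by rw [hc'def]; exact hc.rotate hx0sup
      have hmem' : ∀ v : V, v ∈ c.support ↔ v ∈ c'.support := by
        intro v
        have hrot : c'.support.tail ~r c.support.tail := by
          rw [hc'def]
          exact SimpleGraph.Walk.support_rotate c _ hx0sup
        have h1 : v ∈ c.support ↔ v ∈ c.support.tail := by
          constructor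
          · intro hv
            rw [SimpleGraph.Walk.support_eq_cons, List.mem_cons] at hv
            rcases hv with rfl | hv
            · exact end_mem_tail c hc.not_nil
            · exact hv
          · intro hv
            rw [SimpleGraph.Walk.support_eq_cons, List.mem_cons]
            exact Or.inr hv
        have h2 : v ∈ c'.support ↔ v ∈ c'.support.tail := by
          constructor
          · intro hv
            rw [SimpleGraph.Walk.support_eq_cons, List.mem_cons] at hv
            rcases hv with rfl | hv
            · exact end_mem_tail c' hc'.not_nil
            · exact hv
          · intro hv
            rw [SimpleGraph.Walk.support_eq_cons, List.mem_cons]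
            exact Or.inr hv
        rw [h1, h2]
        exact (hrot.mem_iff).symm
      cases hcc : c' with
      | nil =>
          rw [hcc] at hc'
          exact absurd SimpleGraph.Walk.nil_nil hc'.not_nil
      | @cons _ y0 _ hadj0 d =>
          rw [hcc] at hc'
          have hdpath : d.IsPath :=
            ((SimpleGraph.Walk.cons_isCycle_iff d hadj0).mp hc').1
          have hy0 : y0 ≠ (x0 : V) := hadj0.ne'
          have hsupS0 : ∀ v : V, v ∈ S0 → v ∈ d.support := by
            intro v hv
            have hv' : v ∈ c'.support := (hmem' v).mp hv
            rw [hcc, SimpleGraph.Walk.support_cons, List.mem_cons] at hv'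
            rcases hv' with rfl | hd
            · exact d.end_mem_support
            · exact hd
          set A : Set V := {v : V | ∃ hv : v ∈ S0, (⟨v, hv⟩ : ↥S0) ∉ X} with hA
          have hsuppA : ∀ v ∈ d.support, v ≠ (x0 : V) → v ∈ A := by
            intro v hv hvx
            have hvc' : v ∈ c'.support := by
              rw [hcc, SimpleGraph.Walk.support_cons]
              exact List.mem_cons_of_mem _ hv
            have hvS0 : v ∈ S0 := (hmem' v).mpr hvc'
            refine ⟨hvS0, fun hX' => ?_⟩
            have hXeq := hXsub hX'
            rw [Set.mem_singleton_iff] at hXeq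
            exact hvx (congrArg Subtype.val hXeq)
          have hy0A : y0 ∈ A := hsuppA y0 d.start_mem_support hy0
          have hconnA : (G.induce A).Connected := by
            haveI : Nonempty ↥A := ⟨⟨y0, hy0A⟩⟩
            constructor
            intro v w
            have hv1 := walk_conn G d hdpath A hsuppA hy0A v.1
              (hsupS0 v.1 v.2.choose) v.2
            have hw1 := walk_conn G d hdpath A hsuppA hy0A w.1
              (hsupS0 w.1 w.2.choose) w.2
            exact hv1.trans hw1.symm
          let f : (G.induce A) →g ((G.induce S0).induce Xᶜ) :=
            ⟨fun v => ⟨⟨v.1, v.2.choose⟩, v.2.choose_spec⟩, fun {a b} hab => hab⟩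
          refine SimpleGraph.Connected.map f ?_ hconnA
          rintro ⟨⟨v, hvS⟩, hvX⟩
          refine ⟨⟨v, hvS, hvX⟩, ?_⟩
          apply Subtype.ext
          apply Subtype.ext
          rfl
  obtain ⟨Bs, hBs, hmax⟩ := Set.Finite.exists_maximalFor (fun B' : Set V => B'.ncard)
    {B' : Set V | S0 ⊆ B' ∧ KConnected 2 (G.induce B')} (Set.toFinite _)
    ⟨S0, subset_rfl, hK⟩
  obtain ⟨hBsS, hBsK⟩ := hBs
  have hblock : IsBlock G Bs := by
    right
    refine ⟨hBsK, ?_⟩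
    intro B'' hsub hK''
    have hB''mem : B'' ∈ {B' : Set V | S0 ⊆ B' ∧ KConnected 2 (G.induce B')} :=
      ⟨hBsS.trans hsub, hK''⟩
    have hle : Bs.ncard ≤ B''.ncard := Set.ncard_le_ncard hsub (Set.toFinite _)
    have heq := le_antisymm hle (hmax hB''mem hle)
    exact (Set.eq_of_subset_of_ncard_le hsub (le_of_eq heq.symm) (Set.toFinite _)).symm
  have hcardBs : 4 ≤ Bs.ncard :=
    le_trans hcard4 (Set.ncard_le_ncard hBsS (Set.toFinite _))
  rcases h Bs hblock with ⟨a, b, _, _, rfl⟩ | ⟨a, b, cc, _, _, _, _, _, _, rfl⟩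
  · have h2 : ({a, b} : Set V).ncard ≤ 2 := by
      refine le_trans (Set.ncard_insert_le _ _) ?_
      rw [Set.ncard_singleton]
    omega
  · have h3 : ({a, b, cc} : Set V).ncard ≤ 3 := by
      refine le_trans (Set.ncard_insert_le _ _) ?_
      have := Set.ncard_insert_le b ({cc} : Set V)
      rw [Set.ncard_singleton] at this
      omega
    omega

end Finale
/-- if every block of `G` is a `K₂` or a triangle, then `mmw(G) ≤ 1`. -/
theorem mmw_le_one_of_blocks (V : Type) [Finite V] (G : SimpleGraph V)
    (h : ∀ Bs : Set V, IsBlock G Bs →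
      (∃ a b : V, a ≠ b ∧ G.Adj a b ∧ Bs = {a, b}) ∨
      (∃ a b c : V, a ≠ b ∧ a ≠ c ∧ b ≠ c ∧ G.Adj a b ∧ G.Adj b c ∧ G.Adj a c ∧
        Bs = {a, b, c})) :
    mmw G ≤ 1 := by
  classical
  by_cases hV : Nat.card V ≤ 1
  · have hempty : {k | ∃ D : BranchDecomp G, D.widthLE k} = ∅ := by
      ext k
      simp only [Set.mem_setOf_eq, Set.mem_empty_iff_false, iff_false]
      rintro ⟨D, _⟩
      exact no_decomp hV G D
    rw [mmw, hempty, Nat.sInf_empty]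
    omega
  · push_neg at hV
    obtain ⟨D, hw⟩ := main_decomp (Nat.card V) V G rfl (by omega) (blocks_no_long_cycle G h)
    exact Nat.sInf_le ⟨D, hw⟩
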